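/- arXiv:2104.13890 — 8 statements merged into one kernel-verified Lean document; each statement's English description precedes it below -/
import Mathlib

section
/- Let Gᵢ act on compact metrizable spaces Xᵢ with continuous 1-cocycles Ωᵢ : Gᵢ × Xᵢ → ℝ for i = 1, 2, and form the product action of G₁ × G₂ on X₁ × X₂ with cocycle Ω((g₁,g₂),(x₁,x₂)) = Ω₁(g₁,x₁) + Ω₂(g₂,x₂). If there exists a unique e^{β·Ω₁}-conformal probability measure ν on X₁, then every e^{β·Ω}-conformal probability measure on X₁ × X₂ is of the form ν × μ for a unique e^{β·Ω₂}-conformal probability measure μ on X₂, and conversely every such product measure ν × μ is e^{β·Ω}-conformal. -/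
open MeasureTheory
open scoped NNReal ENNReal

/-- A Borel probability measure `m` is `e^{β·Ω}`-conformal for the action of `G` on `X`. -/
def ConformalMeasure {G X : Type*} [Group G] [TopologicalSpace X] [MeasurableSpace X]
    [MulAction G X] (Ω : G → X → ℝ) (β : ℝ) (m : Measure X) : Prop :=
  ∀ g : G, ∀ f : C(X, ℝ),
    ∫ x, f (g • x) * Real.exp (β * Ω g x) ∂m = ∫ x, f x ∂m

/-- Conformality for the product action of `G₁ × G₂` on `X₁ × X₂` with cocycle
`Ω((g₁,g₂),(x₁,x₂)) = Ω₁(g₁,x₁) + Ω₂(g₂,x₂)`. -/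
def ConformalProd {G₁ G₂ X₁ X₂ : Type*} [Group G₁] [Group G₂]
    [TopologicalSpace X₁] [MeasurableSpace X₁] [TopologicalSpace X₂] [MeasurableSpace X₂]
    [MulAction G₁ X₁] [MulAction G₂ X₂]
    (Ω₁ : G₁ → X₁ → ℝ) (Ω₂ : G₂ → X₂ → ℝ) (β : ℝ) (η : Measure (X₁ × X₂)) : Prop :=
  ∀ (g₁ : G₁) (g₂ : G₂), ∀ f : C(X₁ × X₂, ℝ),
    ∫ p, f (g₁ • p.1, g₂ • p.2) * Real.exp (β * (Ω₁ g₁ p.1 + Ω₂ g₂ p.2)) ∂η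
      = ∫ p, f p ∂η

/-- A cocycle vanishes at the identity. -/
lemma conformal_aux_cocycle_one {G X : Type*} [Group G] [MulAction G X]
    (Ω : G → X → ℝ) (hΩ : ∀ (g h : G) (x : X), Ω g (h • x) + Ω h x = Ω (g * h) x) (x : X) :
    Ω 1 x = 0 := by
  have h := hΩ 1 1 x
  rw [one_smul, mul_one] at h
  linarith

/-- A continuous function on a compact space is integrable w.r.t. a finite measure. -/
lemma conformal_aux_integrable {X : Type*} [TopologicalSpace X] [CompactSpace X]
    [MeasurableSpace X] [OpensMeasurableSpace X] {μ : Measure X} [IsFiniteMeasure μ]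
    {f : X → ℝ} (hf : Continuous f) : Integrable f μ := by
  refine ⟨hf.measurable.aestronglyMeasurable, ?_⟩
  exact HasFiniteIntegral.of_bounded (C := ‖ContinuousMap.mk f hf‖)
    (Filter.Eventually.of_forall fun x => (ContinuousMap.mk f hf).norm_coe_le_norm x)

lemma conformal_aux_lintegral_ofReal {X : Type*} [TopologicalSpace X] [CompactSpace X]
    [MeasurableSpace X] [OpensMeasurableSpace X] {μ : Measure X} [IsFiniteMeasure μ]
    {f : X → ℝ} (hf : Continuous f) (hnn : ∀ x, 0 ≤ f x) :
    ∫⁻ x, ENNReal.ofReal (f x) ∂μ = ENNReal.ofReal (∫ x, f x ∂μ) :=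
  (ofReal_integral_eq_lintegral_ofReal (conformal_aux_integrable hf)
    (Filter.Eventually.of_forall hnn)).symm

/-- If there is a unique `e^{β·Ω₁}`-conformal probability measure `ν` on
`X₁`, then the `e^{β·Ω}`-conformal probability measures on `X₁ × X₂` are exactly the
product measures `ν × μ` with `μ` an `e^{β·Ω₂}`-conformal probability measure. -/
theorem conformal_prod_measure
    {G₁ G₂ X₁ X₂ : Type*} [Group G₁] [Group G₂] [Countable G₁] [Countable G₂]
    [TopologicalSpace X₁] [CompactSpace X₁] [TopologicalSpace.MetrizableSpace X₁]
    [MeasurableSpace X₁] [BorelSpace X₁]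
    [TopologicalSpace X₂] [CompactSpace X₂] [TopologicalSpace.MetrizableSpace X₂]
    [MeasurableSpace X₂] [BorelSpace X₂]
    [MulAction G₁ X₁] [ContinuousConstSMul G₁ X₁]
    [MulAction G₂ X₂] [ContinuousConstSMul G₂ X₂]
    (Ω₁ : G₁ → X₁ → ℝ) (hΩ₁cont : ∀ g, Continuous (Ω₁ g))
    (hΩ₁ : ∀ (g h : G₁) (x : X₁), Ω₁ g (h • x) + Ω₁ h x = Ω₁ (g * h) x)
    (Ω₂ : G₂ → X₂ → ℝ) (hΩ₂cont : ∀ g, Continuous (Ω₂ g))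
    (hΩ₂ : ∀ (g h : G₂) (x : X₂), Ω₂ g (h • x) + Ω₂ h x = Ω₂ (g * h) x)
    (β : ℝ) (ν : Measure X₁) [IsProbabilityMeasure ν]
    (hν : ConformalMeasure Ω₁ β ν)
    (hνuniq : ∀ ν' : Measure X₁, IsProbabilityMeasure ν' → ConformalMeasure Ω₁ β ν' → ν' = ν) :
    (∀ μ : Measure X₂, IsProbabilityMeasure μ → ConformalMeasure Ω₂ β μ →
      ConformalProd Ω₁ Ω₂ β (ν.prod μ)) ∧
    (∀ η : Measure (X₁ × X₂), IsProbabilityMeasure η → ConformalProd Ω₁ Ω₂ β η →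
      ∃! μ : Measure X₂,
        IsProbabilityMeasure μ ∧ ConformalMeasure Ω₂ β μ ∧ η = ν.prod μ) := by
  haveI : SecondCountableTopology X₁ := inferInstance
  haveI : SecondCountableTopology X₂ := inferInstance
  have hΩ₁1 : ∀ x, Ω₁ 1 x = 0 := conformal_aux_cocycle_one Ω₁ hΩ₁
  have hΩ₂1 : ∀ x, Ω₂ 1 x = 0 := conformal_aux_cocycle_one Ω₂ hΩ₂
  constructor
  · -- easy direction: products of conformal measures are conformal
    intro μ hμP hμ g₁ g₂ f
    -- the continuous parametrized integral
    have hKcont : Continuous fun x₁ => ∫ x₂, f (x₁, x₂) ∂μ := by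
      apply continuous_of_dominated (bound := fun _ => ‖f‖)
      · exact fun x₁ => (f.continuous.comp (Continuous.prodMk_right x₁)).measurable.aestronglyMeasurable
      · exact fun x₁ => Filter.Eventually.of_forall fun x₂ => f.norm_coe_le_norm (x₁, x₂)
      · exact integrable_const _
      · exact Filter.Eventually.of_forall fun x₂ =>
          f.continuous.comp (Continuous.prodMk_left x₂)
    set K : C(X₁, ℝ) := ⟨_, hKcont⟩ with hK
    have hsmul₁ : Continuous fun p : X₁ × X₂ => (g₁ • p.1, g₂ • p.2) :=
      ((continuous_const_smul g₁).comp continuous_fst).prodMk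
        ((continuous_const_smul g₂).comp continuous_snd)
    have hintL : Integrable
        (fun p : X₁ × X₂ => f (g₁ • p.1, g₂ • p.2) * Real.exp (β * (Ω₁ g₁ p.1 + Ω₂ g₂ p.2)))
        (ν.prod μ) := by
      apply conformal_aux_integrable
      exact (f.continuous.comp hsmul₁).mul
        (Real.continuous_exp.comp (continuous_const.mul
          (((hΩ₁cont g₁).comp continuous_fst).add ((hΩ₂cont g₂).comp continuous_snd))))
    have hintR : Integrable (fun p : X₁ × X₂ => f p) (ν.prod μ) :=
      conformal_aux_integrable f.continuous
    rw [integral_prod _ hintL, integral_prod _ hintR]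
    have inner : ∀ x₁ : X₁,
        (∫ x₂, f (g₁ • x₁, g₂ • x₂) * Real.exp (β * (Ω₁ g₁ x₁ + Ω₂ g₂ x₂)) ∂μ)
          = K (g₁ • x₁) * Real.exp (β * Ω₁ g₁ x₁) := by
      intro x₁
      have rearr : ∀ x₂ : X₂,
          f (g₁ • x₁, g₂ • x₂) * Real.exp (β * (Ω₁ g₁ x₁ + Ω₂ g₂ x₂))
            = Real.exp (β * Ω₁ g₁ x₁) * (f (g₁ • x₁, g₂ • x₂) * Real.exp (β * Ω₂ g₂ x₂)) := by
        intro x₂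
        rw [mul_add, Real.exp_add]
        ring
      simp only [rearr]
      rw [integral_const_mul]
      have := hμ g₂ ⟨fun y => f (g₁ • x₁, y), f.continuous.comp (Continuous.prodMk_right _)⟩
      simp only [ContinuousMap.coe_mk] at this
      rw [this]
      simp only [hK, ContinuousMap.coe_mk]
      ring
    simp only [inner]
    exact hν g₁ K
  · -- hard direction
    intro η hηP hη
    haveI : IsProbabilityMeasure η.snd :=
      ⟨by rw [Measure.snd_univ]; exact measure_univ⟩
    -- transferring integrals to the second factor
    have hsnd : ∀ (h : X₂ → ℝ), Continuous h →
        ∫ x, h x ∂η.snd = ∫ p, h p.2 ∂η := by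
      intro h hh
      rw [show η.snd = η.map Prod.snd from rfl,
        integral_map measurable_snd.aemeasurable
          (hh.measurable.aestronglyMeasurable)]
    -- conformality of the second marginal
    have hconf₂ : ConformalMeasure Ω₂ β η.snd := by
      intro g₂ f₂
      have e1 : Continuous fun x : X₂ => f₂ (g₂ • x) * Real.exp (β * Ω₂ g₂ x) := by
        exact (f₂.continuous.comp (continuous_const_smul g₂)).mul
          (Real.continuous_exp.comp (continuous_const.mul (hΩ₂cont g₂)))
      rw [hsnd _ e1, hsnd _ f₂.continuous]
      have := hη 1 g₂ (f₂.comp ⟨Prod.snd, continuous_snd⟩)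
      simpa only [ContinuousMap.comp_apply, ContinuousMap.coe_mk, hΩ₁1, zero_add] using this
    -- the key product formula for nonnegative f₂
    have key : ∀ (f₁ : C(X₁, ℝ)) (f₂ : C(X₂, ℝ)), (∀ y, 0 ≤ f₂ y) →
        ∫ p, f₁ p.1 * f₂ p.2 ∂η = (∫ x, f₁ x ∂ν) * ∫ p, f₂ p.2 ∂η := by
      intro f₁ f₂ hf₂nn
      have hf₂c : Continuous fun p : X₁ × X₂ => f₂ p.2 := f₂.continuous.comp continuous_snd
      have hf₂int : Integrable (fun p : X₁ × X₂ => f₂ p.2) η := conformal_aux_integrable hf₂c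
      set c := ∫ p : X₁ × X₂, f₂ p.2 ∂η with hc
      have hc0 : 0 ≤ c := integral_nonneg fun p => hf₂nn p.2
      by_cases hc' : c = 0
      · have hae : (fun p : X₁ × X₂ => f₂ p.2) =ᵐ[η] 0 :=
          (integral_eq_zero_iff_of_nonneg (fun p : X₁ × X₂ => hf₂nn p.2) hf₂int).mp hc'
        have : (fun p : X₁ × X₂ => f₁ p.1 * f₂ p.2) =ᵐ[η] 0 := by
          filter_upwards [hae] with p hp
          simp only [Pi.zero_apply] at hp ⊢
          rw [hp, mul_zero]
        rw [integral_congr_ae this, hc', mul_zero]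
        simp
      · have hcpos : 0 < c := lt_of_le_of_ne hc0 (Ne.symm hc')
        -- the weighted measure on X₁
        set w : X₁ × X₂ → ℝ≥0 := fun p => Real.toNNReal (c⁻¹ * f₂ p.2) with hw
        have hwmeas : Measurable w :=
          ((continuous_const.mul hf₂c).measurable).real_toNNReal
        have hwnn : ∀ p : X₁ × X₂, 0 ≤ c⁻¹ * f₂ p.2 := fun p =>
          mul_nonneg (inv_nonneg.mpr hc0) (hf₂nn p.2)
        set ν' : Measure X₁ := (η.withDensity fun p => (w p : ℝ≥0∞)).fst with hν'
        -- integral formula for ν'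
        have hν'int : ∀ (h : X₁ → ℝ), Continuous h →
            ∫ x, h x ∂ν' = ∫ p, (c⁻¹ * f₂ p.2) * h p.1 ∂η := by
          intro h hh
          rw [hν', show (η.withDensity fun p => (w p : ℝ≥0∞)).fst
              = (η.withDensity fun p => (w p : ℝ≥0∞)).map Prod.fst from rfl,
            integral_map measurable_fst.aemeasurable (hh.measurable.aestronglyMeasurable),
            integral_withDensity_eq_integral_smul hwmeas]
          refine integral_congr_ae (Filter.Eventually.of_forall fun p => ?_)
          simp only [hw, NNReal.smul_def, Real.coe_toNNReal _ (hwnn p), smul_eq_mul]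
        -- ν' is a probability measure
        have hwd_univ : (η.withDensity fun p => (w p : ℝ≥0∞)) Set.univ = 1 := by
          rw [withDensity_apply _ MeasurableSet.univ, setLIntegral_univ]
          have : ∀ p : X₁ × X₂, ((w p : ℝ≥0∞)) = ENNReal.ofReal (c⁻¹ * f₂ p.2) := fun p => rfl
          simp only [this]
          rw [conformal_aux_lintegral_ofReal (f := fun p : X₁ × X₂ => c⁻¹ * f₂ p.2) (continuous_const.mul hf₂c) hwnn]
          rw [integral_const_mul, ← hc, inv_mul_cancel₀ hc', ENNReal.ofReal_one]
        haveI hν'P : IsProbabilityMeasure ν' := by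
          constructor
          rw [hν', Measure.fst_univ, hwd_univ]
        -- ν' is conformal
        have hν'conf : ConformalMeasure Ω₁ β ν' := by
          intro g₁ h
          have e2 : Continuous fun x : X₁ => h (g₁ • x) * Real.exp (β * Ω₁ g₁ x) := by
            exact (h.continuous.comp (continuous_const_smul g₁)).mul
              (Real.continuous_exp.comp (continuous_const.mul (hΩ₁cont g₁)))
          rw [hν'int _ e2, hν'int _ h.continuous]
          set F : C(X₁ × X₂, ℝ) :=
            ⟨fun p => h p.1 * f₂ p.2, (h.continuous.comp continuous_fst).mul hf₂c⟩ with hF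
          have hηF := hη g₁ 1 F
          have rearr : ∀ p : X₁ × X₂,
              (c⁻¹ * f₂ p.2) * (h (g₁ • p.1) * Real.exp (β * Ω₁ g₁ p.1))
                = c⁻¹ * (F (g₁ • p.1, (1 : G₂) • p.2)
                    * Real.exp (β * (Ω₁ g₁ p.1 + Ω₂ 1 p.2))) := by
            intro p
            simp only [hF, ContinuousMap.coe_mk, one_smul, hΩ₂1, add_zero]
            ring
          have rearr' : ∀ p : X₁ × X₂,
              (c⁻¹ * f₂ p.2) * h p.1 = c⁻¹ * F p := by
            intro p
            simp only [hF, ContinuousMap.coe_mk]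
            ring
          simp only [rearr, rearr']
          rw [integral_const_mul, integral_const_mul, hηF]
        -- uniqueness gives ν' = ν
        have hν'ν : ν' = ν := hνuniq ν' hν'P hν'conf
        have := hν'int f₁ f₁.continuous
        rw [hν'ν] at this
        have expand : ∀ p : X₁ × X₂, (c⁻¹ * f₂ p.2) * f₁ p.1 = c⁻¹ * (f₁ p.1 * f₂ p.2) :=
          fun p => by ring
        simp only [expand] at this
        rw [integral_const_mul] at this
        rw [this, inv_mul_eq_div, div_mul_cancel₀ _ hc']
    -- extend to all continuous f₂
    have key' : ∀ (f₁ : C(X₁, ℝ)) (f₂ : C(X₂, ℝ)),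
        ∫ p, f₁ p.1 * f₂ p.2 ∂η = (∫ x, f₁ x ∂ν) * ∫ p, f₂ p.2 ∂η := by
      intro f₁ f₂
      have h1 := key f₁ (f₂ + ContinuousMap.const X₂ ‖f₂‖) (fun y => by
        have := abs_le.mp (f₂.norm_coe_le_norm y)
        simp only [ContinuousMap.add_apply, ContinuousMap.const_apply]
        linarith [this.1])
      have h2 := key f₁ (ContinuousMap.const X₂ ‖f₂‖) (fun y => by
        simp only [ContinuousMap.const_apply]; exact norm_nonneg f₂)
      have hint1 : Integrable (fun p : X₁ × X₂ => f₁ p.1 * f₂ p.2) η :=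
        conformal_aux_integrable ((f₁.continuous.comp continuous_fst).mul
          (f₂.continuous.comp continuous_snd))
      have hint2 : Integrable (fun p : X₁ × X₂ => f₁ p.1 * ‖f₂‖) η :=
        conformal_aux_integrable ((f₁.continuous.comp continuous_fst).mul continuous_const)
      have hint3 : Integrable (fun p : X₁ × X₂ => f₂ p.2) η :=
        conformal_aux_integrable (f₂.continuous.comp continuous_snd)
      simp only [ContinuousMap.add_apply, ContinuousMap.const_apply, mul_add] at h1
      rw [integral_add hint1 hint2, integral_add hint3 (integrable_const _)] at h1
      simp only [ContinuousMap.const_apply] at h2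
      linarith [h1, h2]
    -- from the product formula to equality on rectangles
    have rect : ∀ (A : Set X₁) (B : Set X₂), MeasurableSet A → MeasurableSet B →
        η (A ×ˢ B) = ν A * η.snd B := by
      intro A B hA hB
      -- step (a): the weighted first marginal is a multiple of ν
      have stepA : ∀ (f₂ : C(X₂, ℝ)), (∀ y, 0 ≤ f₂ y) →
          (η.withDensity fun p => ENNReal.ofReal (f₂ p.2)).fst
            = (ENNReal.ofReal (∫ p, f₂ p.2 ∂η)) • ν := by
        intro f₂ hf₂nn
        have hf₂c : Continuous fun p : X₁ × X₂ => f₂ p.2 := f₂.continuous.comp continuous_snd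
        set c := ∫ p : X₁ × X₂, f₂ p.2 ∂η with hc
        have hc0 : 0 ≤ c := integral_nonneg fun p => hf₂nn p.2
        have hdmeas : Measurable fun p : X₁ × X₂ => ENNReal.ofReal (f₂ p.2) :=
          hf₂c.measurable.ennreal_ofReal
        haveI : IsFiniteMeasure (η.withDensity fun p => ENNReal.ofReal (f₂ p.2)) := by
          constructor
          rw [withDensity_apply _ MeasurableSet.univ, setLIntegral_univ,
            conformal_aux_lintegral_ofReal hf₂c (fun p => hf₂nn p.2)]
          exact ENNReal.ofReal_lt_top
        haveI : IsFiniteMeasure (η.withDensity fun p => ENNReal.ofReal (f₂ p.2)).fst := by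
          constructor
          rw [Measure.fst_univ]
          exact measure_lt_top _ _
        apply ext_of_forall_lintegral_eq_of_IsFiniteMeasure
        intro q
        have hqc : Continuous fun x : X₁ => (q x : ℝ) :=
          NNReal.continuous_coe.comp q.continuous
        have hqnn : ∀ x : X₁, 0 ≤ (q x : ℝ) := fun x => (q x).coe_nonneg
        rw [show (η.withDensity fun p => ENNReal.ofReal (f₂ p.2)).fst
            = (η.withDensity fun p => ENNReal.ofReal (f₂ p.2)).map Prod.fst from rfl,
          lintegral_map (q.continuous.measurable.coe_nnreal_ennreal) measurable_fst,
          lintegral_withDensity_eq_lintegral_mul _ hdmeas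
            (show Measurable fun p : X₁ × X₂ => ((q p.1 : ℝ≥0) : ℝ≥0∞) from
              q.continuous.measurable.coe_nnreal_ennreal.comp measurable_fst)]
        have conv : ∀ p : X₁ × X₂,
            (ENNReal.ofReal (f₂ p.2)) * ((q p.1 : ℝ≥0) : ℝ≥0∞)
              = ENNReal.ofReal ((q p.1 : ℝ) * f₂ p.2) := by
          intro p
          rw [ENNReal.ofReal_mul (hqnn p.1), ENNReal.ofReal_coe_nnreal, mul_comm]
        simp only [Pi.mul_apply]
        rw [show (fun p : X₁ × X₂ => ENNReal.ofReal (f₂ p.2) * ((q p.1 : ℝ≥0) : ℝ≥0∞))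
            = fun p => ENNReal.ofReal ((q p.1 : ℝ) * f₂ p.2) from funext conv]
        rw [conformal_aux_lintegral_ofReal
          (show Continuous fun p : X₁ × X₂ => (q p.1 : ℝ) * f₂ p.2 from
            (hqc.comp continuous_fst).mul hf₂c)
          (fun p => mul_nonneg (hqnn p.1) (hf₂nn p.2))]
        have hkey := key' ⟨fun x => (q x : ℝ), hqc⟩ f₂
        simp only [ContinuousMap.coe_mk] at hkey
        rw [hkey]
        rw [lintegral_smul_measure]
        have : ∫⁻ x, (q x : ℝ≥0∞) ∂ν = ENNReal.ofReal (∫ x, (q x : ℝ) ∂ν) := by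
          rw [← conformal_aux_lintegral_ofReal hqc hqnn]
          congr 1
          funext x
          rw [ENNReal.ofReal_coe_nnreal]
        rw [this, smul_eq_mul, ← ENNReal.ofReal_mul hc0, ← hc]
        congr 1
        ring
      -- step (b): for a fixed measurable set A
      have stepB : (η.restrict (Prod.fst ⁻¹' A)).snd = ν A • η.snd := by
        haveI : IsFiniteMeasure (η.restrict (Prod.fst ⁻¹' A)) :=
          ⟨lt_of_le_of_lt (Measure.restrict_apply_le _ _) (measure_lt_top η _)⟩
        haveI : IsFiniteMeasure (η.restrict (Prod.fst ⁻¹' A)).snd :=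
          ⟨by rw [Measure.snd_univ]; exact measure_lt_top _ _⟩
        apply ext_of_forall_lintegral_eq_of_IsFiniteMeasure
        intro q
        have hqc : Continuous fun y : X₂ => (q y : ℝ) :=
          NNReal.continuous_coe.comp q.continuous
        have hqnn : ∀ y : X₂, 0 ≤ (q y : ℝ) := fun y => (q y).coe_nonneg
        have hstepA := stepA ⟨fun y => (q y : ℝ), hqc⟩ hqnn
        simp only [ContinuousMap.coe_mk] at hstepA
        have LHS : ∫⁻ y, (q y : ℝ≥0∞) ∂(η.restrict (Prod.fst ⁻¹' A)).snd
            = ∫⁻ p in Prod.fst ⁻¹' A, ((q p.2 : ℝ≥0) : ℝ≥0∞) ∂η := by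
          rw [show (η.restrict (Prod.fst ⁻¹' A)).snd
              = (η.restrict (Prod.fst ⁻¹' A)).map Prod.snd from rfl,
            lintegral_map (q.continuous.measurable.coe_nnreal_ennreal) measurable_snd]
        rw [LHS]
        have hA' : (η.withDensity fun p => ENNReal.ofReal ((q p.2 : ℝ))).fst A
            = ENNReal.ofReal (∫ p : X₁ × X₂, (q p.2 : ℝ) ∂η) * ν A := by
          rw [hstepA]
          simp [Measure.smul_apply, smul_eq_mul]
        rw [Measure.fst_apply hA, withDensity_apply _ (measurable_fst hA)] at hA'
        have conv : ∀ p : X₁ × X₂, ENNReal.ofReal ((q p.2 : ℝ)) = ((q p.2 : ℝ≥0) : ℝ≥0∞) :=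
          fun p => ENNReal.ofReal_coe_nnreal
        rw [show (fun p : X₁ × X₂ => ENNReal.ofReal ((q p.2 : ℝ)))
            = fun p => ((q p.2 : ℝ≥0) : ℝ≥0∞) from funext conv] at hA'
        rw [hA']
        -- compute the RHS
        rw [lintegral_smul_measure,
          show η.snd = η.map Prod.snd from rfl,
          lintegral_map (q.continuous.measurable.coe_nnreal_ennreal) measurable_snd]
        have : ∫⁻ p : X₁ × X₂, ((q p.2 : ℝ≥0) : ℝ≥0∞) ∂η
            = ENNReal.ofReal (∫ p : X₁ × X₂, (q p.2 : ℝ) ∂η) := by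
          rw [← conformal_aux_lintegral_ofReal
            (show Continuous fun p : X₁ × X₂ => (q p.2 : ℝ) from hqc.comp continuous_snd)
            (fun p => hqnn p.2)]
          congr 1
          funext p
          rw [ENNReal.ofReal_coe_nnreal]
        rw [this, mul_comm, smul_eq_mul]
      have hBeval : (η.restrict (Prod.fst ⁻¹' A)).snd B = (ν A • η.snd) B := by
        rw [stepB]
      rw [Measure.snd_apply hB, Measure.restrict_apply (measurable_snd hB)] at hBeval
      rw [Set.prod_eq, Set.inter_comm, hBeval]
      simp [Measure.smul_apply, smul_eq_mul]
    have hprod : ν.prod η.snd = η :=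
      Measure.prod_eq fun s t hs ht => rect s t hs ht
    refine ⟨η.snd, ⟨inferInstance, hconf₂, hprod.symm⟩, ?_⟩
    rintro μ' ⟨hμ'P, -, hμ'⟩
    calc μ' = (ν.prod μ').snd := (Measure.snd_prod).symm
    _ = η.snd := by rw [← hμ']
end

section
/- Let G be a finitely generated group of subexponential growth with word length |·|, acting on a compact metrizable space X with continuous 1-cocycle Ω : G × X → ℝ, and let β ∈ ℝ. If there exists an ergodic e^{β·Ω}-conformal probability measure μ on X, then the essential value of the G-invariant function x ↦ limsup_{g→∞} β·Ω(g,x)/|g| is ≤ 0; i.e., for μ-a.e. x ∈ X one has limsup_{g→∞} β·Ω(g,x)/|g| ≤ 0. -/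
open MeasureTheory Filter

/-- The word length of `g` with respect to a generating set `S`. -/
noncomputable def wordLength {G : Type*} [Group G] (S : Set G) (g : G) : ℕ :=
  sInf {n | ∃ w : Fin n → G, (∀ i, w i ∈ S) ∧ g = (List.ofFn w).prod}

/-- For a finitely generated group of subexponential growth, an ergodic
conformal measure forces `limsup_{g→∞} β·Ω(g,x)/|g| ≤ 0` almost everywhere. -/
theorem ergodic_conformal_limsup_nonpos
    {G X : Type*} [Group G] [Countable G] [TopologicalSpace X] [CompactSpace X]
    [TopologicalSpace.MetrizableSpace X] [MeasurableSpace X] [BorelSpace X]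
    [MulAction G X] [ContinuousConstSMul G X]
    (S : Finset G) (hsym : (S : Set G)⁻¹ = (S : Set G))
    (hgen : Subgroup.closure (S : Set G) = ⊤)
    (hgrowth : ∀ ε > (0 : ℝ), ∀ᶠ k in atTop,
      (Nat.card {g : G // wordLength (S : Set G) g = k} : ℝ) ≤ (1 + ε) ^ k)
    (Ω : G → X → ℝ) (hΩcont : ∀ g : G, Continuous (Ω g))
    (hΩ : ∀ (g h : G) (x : X), Ω g (h • x) + Ω h x = Ω (g * h) x)
    (β : ℝ) (μ : Measure X) [IsProbabilityMeasure μ]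
    (hconf : ConformalMeasure Ω β μ)
    (herg : ∀ B : Set X, MeasurableSet B →
      (∀ g : G, (fun x => g • x) ⁻¹' B = B) → μ B = 0 ∨ μ B = 1) :
    ∀ᵐ x ∂μ,
      Filter.limsup (fun g : G => β * Ω g x / (wordLength (S : Set G) g : ℝ))
        (Filter.comap (fun g : G => wordLength (S : Set G) g) Filter.atTop) ≤ 0 := by
  classical
  set wl : G → ℕ := wordLength (S : Set G) with hwldef
  -- every element of G is a word in S
  have hword : ∀ g : G, ∃ l : List G, (∀ y ∈ l, y ∈ (S : Set G)) ∧ l.prod = g := by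
    intro g
    have hg : g ∈ Subgroup.closure (S : Set G) := by rw [hgen]; trivial
    refine Subgroup.closure_induction ?_ ?_ ?_ ?_ hg
    · intro y hy; exact ⟨[y], by simpa using hy, by simp⟩
    · exact ⟨[], by simp, by simp⟩
    · rintro a b _ _ ⟨la, hla, hpa⟩ ⟨lb, hlb, hpb⟩
      exact ⟨la ++ lb, by
        intro y hy
        rcases List.mem_append.1 hy with h | h
        exacts [hla y h, hlb y h], by rw [List.prod_append, hpa, hpb]⟩
    · rintro a _ ⟨l, hl, hp⟩
      refine ⟨(l.map fun z => z⁻¹).reverse, ?_, ?_⟩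
      · intro y hy
        rw [List.mem_reverse, List.mem_map] at hy
        obtain ⟨z, hz, rfl⟩ := hy
        have : z⁻¹ ∈ (S : Set G)⁻¹ := by
          rw [Set.mem_inv, inv_inv]; exact hl z hz
        rwa [hsym] at this
      · rw [← List.prod_inv_reverse, hp]
  have hwordFin : ∀ g : G,
      {n | ∃ w : Fin n → G, (∀ i, w i ∈ (S : Set G)) ∧ g = (List.ofFn w).prod}.Nonempty := by
    intro g
    obtain ⟨l, hl, hp⟩ := hword g
    exact ⟨l.length, l.get, fun i => hl _ (l.get_mem _), by rw [List.ofFn_get, hp]⟩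
  have hmemInf : ∀ g : G, ∃ w : Fin (wl g) → G,
      (∀ i, w i ∈ (S : Set G)) ∧ g = (List.ofFn w).prod := by
    intro g
    have := Nat.sInf_mem (hwordFin g)
    exact this
  -- a uniform bound on the cocycle over the generators
  have hCex : ∃ C : ℝ, 0 ≤ C ∧ ∀ s ∈ S, ∀ x : X, |Ω s x| ≤ C := by
    have key : ∀ s : G, ∃ c : ℝ, 0 ≤ c ∧ ∀ x : X, |Ω s x| ≤ c := by
      intro s
      obtain ⟨c, hc⟩ := IsCompact.exists_bound_of_continuousOn isCompact_univ
        (hΩcont s).continuousOn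
      exact ⟨max c 0, le_max_right _ _, fun x =>
        le_trans (by simpa [Real.norm_eq_abs] using hc x trivial) (le_max_left _ _)⟩
    choose c hc0 hcb using key
    refine ⟨∑ s ∈ S, c s, Finset.sum_nonneg fun s _ => hc0 s, fun s hs x => ?_⟩
    exact le_trans (hcb s x) (Finset.single_le_sum (fun t _ => hc0 t) hs)
  obtain ⟨C, hC0, hCb⟩ := hCex
  -- cocycle at 1 is 0
  have hΩ1 : ∀ x : X, Ω (1 : G) x = 0 := by
    intro x
    have h := hΩ 1 1 x
    rw [one_smul, one_mul] at h
    linarith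
  -- bound over words
  have hlist : ∀ l : List G, (∀ y ∈ l, y ∈ (S : Set G)) → ∀ x : X,
      |Ω l.prod x| ≤ C * l.length := by
    intro l
    induction l with
    | nil => intro _ x; simp [hΩ1 x]
    | cons a l ih =>
      intro hmem x
      have hsplit : Ω ((a :: l).prod) x = Ω a (l.prod • x) + Ω l.prod x := by
        rw [List.prod_cons]; exact (hΩ a l.prod x).symm
      have h1 : |Ω a (l.prod • x)| ≤ C := hCb a (by simpa using hmem a (by simp)) _
      have h2 : |Ω l.prod x| ≤ C * l.length := ih (fun y hy => hmem y (by simp [hy])) x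
      calc |Ω ((a :: l).prod) x| ≤ |Ω a (l.prod • x)| + |Ω l.prod x| := by
            rw [hsplit]; exact abs_add_le _ _
        _ ≤ C + C * l.length := add_le_add h1 h2
        _ = C * (a :: l).length := by simp [List.length_cons]; ring
  have hΩbound : ∀ (g : G) (x : X), |Ω g x| ≤ C * wl g := by
    intro g x
    obtain ⟨w, hw, hprod⟩ := hmemInf g
    calc |Ω g x| = |Ω (List.ofFn w).prod x| := by rw [← hprod]
      _ ≤ C * (List.ofFn w).length := hlist _ (fun y hy => by
          obtain ⟨i, rfl⟩ := List.mem_ofFn.1 hy; exact hw i) x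
      _ = C * wl g := by rw [List.length_ofFn]
  -- level sets are finite
  have hfin : ∀ k : ℕ, {g : G | wl g = k}.Finite := by
    intro k
    have hsub : {g : G | wl g = k} ⊆
        Set.range (fun w : Fin k → S => (List.ofFn fun i => ((w i : G))).prod) := by
      intro g hg
      have hk : wl g = k := hg
      subst hk
      obtain ⟨w, hw, hprod⟩ := hmemInf g
      exact ⟨fun i => ⟨w i, hw i⟩, hprod.symm⟩
    exact (Set.finite_range _).subset hsub
  set Fk : ℕ → Finset G := fun k => (hfin k).toFinset with hFk
  have hFkmem : ∀ k (g : G), g ∈ Fk k ↔ wl g = k := by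
    intro k g; simp [hFk, Set.Finite.mem_toFinset]
  have hcards : ∀ k : ℕ, ((Fk k).card : ℝ) = (Nat.card {g : G // wl g = k} : ℝ) := by
    intro k
    have : Nat.card {g : G // wl g = k} = (Fk k).card :=
      Nat.card_eq_card_finite_toFinset (hfin k)
    rw [this]
  -- integral of the conformal density is 1
  have hint : ∀ g : G, ∫ x, Real.exp (β * Ω g x) ∂μ = 1 := by
    intro g
    have h := hconf g 1
    simpa [integral_const] using h
  have hinteg : ∀ g : G, Integrable (fun x => Real.exp (β * Ω g x)) μ := by
    intro g
    have hc : Continuous fun x => Real.exp (β * Ω g x) :=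
      Real.continuous_exp.comp (continuous_const.mul (hΩcont g))
    exact hc.integrable_of_hasCompactSupport (isClosed_tsupport _).isCompact
  have hlint : ∀ g : G, ∫⁻ x, ENNReal.ofReal (Real.exp (β * Ω g x)) ∂μ = 1 := by
    intro g
    rw [← ofReal_integral_eq_lintegral_ofReal (hinteg g)
      (Eventually.of_forall fun x => (Real.exp_pos _).le), hint g, ENNReal.ofReal_one]
  -- Markov inequality
  have hmark : ∀ (g : G) (t : ℝ), μ {x | t ≤ β * Ω g x} ≤ ENNReal.ofReal (Real.exp (-t)) := by
    intro g t
    have hae : AEMeasurable (fun x => ENNReal.ofReal (Real.exp (β * Ω g x))) μ :=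
      (ENNReal.continuous_ofReal.comp
        (Real.continuous_exp.comp (continuous_const.mul (hΩcont g)))).measurable.aemeasurable
    have hε : ENNReal.ofReal (Real.exp t) ≠ 0 :=
      ne_of_gt (ENNReal.ofReal_pos.2 (Real.exp_pos t))
    have hεt : ENNReal.ofReal (Real.exp t) ≠ ⊤ := ENNReal.ofReal_ne_top
    have h := meas_ge_le_lintegral_div hae hε hεt
    rw [hlint g] at h
    have hset : {x | ENNReal.ofReal (Real.exp t) ≤ ENNReal.ofReal (Real.exp (β * Ω g x))}
        = {x | t ≤ β * Ω g x} := by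
      ext x
      simp [ENNReal.ofReal_le_ofReal_iff (Real.exp_pos (β * Ω g x)).le, Real.exp_le_exp]
    rw [hset] at h
    refine h.trans ?_
    rw [Real.exp_neg, ENNReal.ofReal_inv_of_pos (Real.exp_pos t), one_div]
  -- the bad sets
  set δ : ℕ → ℝ := fun m => 1 / ((m : ℝ) + 1) with hδdef
  have hδpos : ∀ m, 0 < δ m := by intro m; positivity
  set A : ℕ → ℕ → Set X := fun m k => ⋃ g ∈ Fk k, {x | δ m * k ≤ β * Ω g x} with hAdef
  have hA : ∀ m k, μ (A m k) ≤
      ENNReal.ofReal (((Fk k).card : ℝ) * Real.exp (-(δ m * k))) := by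
    intro m k
    refine (measure_biUnion_finset_le _ _).trans ?_
    calc ∑ g ∈ Fk k, μ {x | δ m * k ≤ β * Ω g x}
        ≤ ∑ _g ∈ Fk k, ENNReal.ofReal (Real.exp (-(δ m * k))) :=
          Finset.sum_le_sum fun g _ => hmark g _
      _ = (Fk k).card • ENNReal.ofReal (Real.exp (-(δ m * k))) := by rw [Finset.sum_const]
      _ = ENNReal.ofReal (((Fk k).card : ℝ) * Real.exp (-(δ m * k))) := by
          rw [nsmul_eq_mul, ← ENNReal.ofReal_natCast ((Fk k).card),
            ← ENNReal.ofReal_mul (by positivity)]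
  -- Borel–Cantelli summability
  have hsum : ∀ m : ℕ, (∑' k, μ (A m k)) ≠ ⊤ := by
    intro m
    have hδ := hδpos m
    have hexp1 : 1 < Real.exp (δ m) := by
      have := Real.add_one_le_exp (δ m); linarith
    set ε : ℝ := (Real.exp (δ m) - 1) / 2 with hεdef
    have hε0 : 0 < ε := by rw [hεdef]; linarith
    set r : ℝ := (1 + ε) * Real.exp (-(δ m)) with hrdef
    have hr0 : 0 ≤ r := by positivity
    have hr1 : r < 1 := by
      have h2 : 1 + ε < Real.exp (δ m) := by rw [hεdef]; linarith
      rw [hrdef, Real.exp_neg, ← div_eq_mul_inv]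
      exact (div_lt_one (Real.exp_pos _)).2 h2
    obtain ⟨N, hN⟩ := eventually_atTop.1 (hgrowth ε hε0)
    have hbound : ∀ k, N ≤ k → μ (A m k) ≤ ENNReal.ofReal (r ^ k) := by
      intro k hk
      refine (hA m k).trans (ENNReal.ofReal_le_ofReal ?_)
      have h1 : ((Fk k).card : ℝ) ≤ (1 + ε) ^ k := by rw [hcards]; exact hN k hk
      have h2 : Real.exp (-(δ m * k)) = Real.exp (-(δ m)) ^ k := by
        rw [show -(δ m * (k : ℝ)) = (k : ℝ) * (-(δ m)) by ring, Real.exp_nat_mul]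
      calc ((Fk k).card : ℝ) * Real.exp (-(δ m * k))
          ≤ (1 + ε) ^ k * Real.exp (-(δ m)) ^ k := by
            rw [h2]
            exact mul_le_mul_of_nonneg_right h1 (pow_nonneg (Real.exp_pos _).le k)
        _ = r ^ k := by rw [hrdef, mul_pow]
    have hB : ∀ k, μ (A m k) ≤ (if k < N then (1 : ENNReal) else 0) + ENNReal.ofReal (r ^ k) := by
      intro k
      by_cases hk : k < N
      · simp only [if_pos hk]
        exact le_trans prob_le_one le_self_add
      · simp only [if_neg hk, zero_add]
        exact hbound k (le_of_not_gt hk)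
    have htot : (∑' k, μ (A m k)) ≤
        (∑' k, (if k < N then (1 : ENNReal) else 0)) + ∑' k, ENNReal.ofReal (r ^ k) := by
      refine le_trans (ENNReal.tsum_le_tsum hB) ?_
      rw [ENNReal.tsum_add]
    have h1 : (∑' k, (if k < N then (1 : ENNReal) else 0)) = N := by
      rw [tsum_eq_sum (s := Finset.range N) (fun k hk => by
        simp [Finset.mem_range] at hk; simp [hk])]
      rw [Finset.sum_ite_of_true fun k hk => Finset.mem_range.mp hk]
      simp
    have h2 : (∑' k, ENNReal.ofReal (r ^ k)) ≠ ⊤ := by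
      rw [← ENNReal.ofReal_tsum_of_nonneg (fun k => pow_nonneg hr0 k)
        (summable_geometric_of_lt_one hr0 hr1)]
      exact ENNReal.ofReal_ne_top
    refine ne_of_lt (lt_of_le_of_lt htot ?_)
    rw [h1]
    exact ENNReal.add_lt_top.2 ⟨ENNReal.natCast_lt_top N, lt_top_iff_ne_top.2 h2⟩
  -- Borel–Cantelli
  have haeBC : ∀ᵐ x ∂μ, ∀ m : ℕ, ∀ᶠ k in atTop, x ∉ A m k := by
    rw [ae_all_iff]
    intro m
    exact ae_eventually_notMem (hsum m)
  filter_upwards [haeBC] with x hx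
  by_cases hL : (Filter.comap (fun g : G => wl g) Filter.atTop) = ⊥
  · rw [show (fun g : G => wl g) = wl from rfl] at hL
    have : Filter.comap wl atTop = ⊥ := hL
    rw [show (Filter.comap (fun g : G => wl g) Filter.atTop) = Filter.comap wl Filter.atTop
      from rfl, this]
    rw [limsup_eq]
    have huniv : {a : ℝ | ∀ᶠ g in (⊥ : Filter G), β * Ω g x / (wl g : ℝ) ≤ a} = Set.univ := by
      ext a; simp
    rw [huniv]
    have hnb : ¬BddBelow (Set.univ : Set ℝ) := by
      rintro ⟨b, hb⟩
      have := hb (Set.mem_univ (b - 1))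
      linarith
    rw [csInf_of_not_bddBelow hnb, Real.sInf_empty]
  · haveI hne : (Filter.comap (fun g : G => wl g) Filter.atTop).NeBot := ⟨hL⟩
    have hlb : ∀ g : G, -(|β| * C) ≤ β * Ω g x / (wl g : ℝ) := by
      intro g
      rcases Nat.eq_zero_or_pos (wl g) with h0 | hpos
      · rw [h0]
        simp only [Nat.cast_zero, div_zero]
        exact neg_nonpos.2 (by positivity)
      · have hn : (0 : ℝ) < (wl g : ℝ) := by exact_mod_cast hpos
        rw [le_div_iff₀ hn]
        have habs : |β * Ω g x| ≤ |β| * (C * (wl g : ℝ)) := by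
          rw [abs_mul]
          exact mul_le_mul_of_nonneg_left (hΩbound g x) (abs_nonneg β)
        have heq : -(|β| * C) * (wl g : ℝ) = -(|β| * (C * (wl g : ℝ))) := by ring
        rw [heq]
        linarith [neg_abs_le (β * Ω g x)]
    have hcob : IsCoboundedUnder (· ≤ ·) (Filter.comap (fun g : G => wl g) Filter.atTop)
        (fun g : G => β * Ω g x / (wl g : ℝ)) :=
      isCoboundedUnder_le_of_le _ hlb
    have hls : ∀ m : ℕ, Filter.limsup (fun g : G => β * Ω g x / (wl g : ℝ))
        (Filter.comap (fun g : G => wl g) Filter.atTop) ≤ δ m := by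
      intro m
      refine limsup_le_of_le hcob ?_
      rw [eventually_comap]
      filter_upwards [hx m, eventually_ge_atTop 1] with k hk hk1
      intro g hg
      have hkpos : (0 : ℝ) < (k : ℝ) := by exact_mod_cast hk1
      rw [hg, div_le_iff₀ hkpos]
      by_contra hcon
      push_neg at hcon
      exact hk (Set.mem_biUnion ((hFkmem k g).2 hg) (le_of_lt hcon))
    exact ge_of_tendsto' tendsto_one_div_add_atTop_nhds_zero_nat hls
end

section
/- Let G be a finitely generated group of subexponential growth acting on a compact metrizable space X, with continuous 1-cocycle Ω : G × X → ℝ and β ∈ ℝ. If there exists a point x ∈ X such that limsup_{g→∞} β·Ω(g,x)/|g| ≤ 0, then for every s > 0 the series Σ_{g∈G} e^{β·Ω(g,x) − |g|·s} converges, the normalized measures m_s = (Σ_g e^{β·Ω(g,x)−|g|s})^{-1} Σ_{g∈G} e^{β·Ω(g,x)−|g|s} δ_{g·x} satisfy |∫ f(h·y) e^{β·Ω(h,y)} dm_s(y) − ∫ f dm_s| ≤ ‖f‖_∞ (e^{|h|s} − 1) for all continuous f and all h ∈ G, and consequently any weak* limit point of (m_s) as s → 0 is an e^{β·Ω}-conformal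 probability measure. -/
open MeasureTheory Filter Topology

/-- The integral of `f` against the normalized measure
`m_s = c_s⁻¹ Σ_g e^{β·Ω(g,x) − |g|·s} δ_{g·x}`. -/
noncomputable def msIntegral {G X : Type*} [Group G] [MulAction G X]
    (Ω : G → X → ℝ) (β : ℝ) (ℓ : G → ℕ) (x : X) (s : ℝ) (f : X → ℝ) : ℝ :=
  (∑' g : G, Real.exp (β * Ω g x - (ℓ g : ℝ) * s))⁻¹ *
    ∑' g : G, Real.exp (β * Ω g x - (ℓ g : ℝ) * s) * f (g • x)


set_option linter.unusedSectionVars false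
set_option maxHeartbeats 1000000

section WL
variable {G : Type*} [Group G] {S : Set G}

lemma mem_wordSet_iff {g : G} {n : ℕ} :
    (∃ w : Fin n → G, (∀ i, w i ∈ S) ∧ g = (List.ofFn w).prod) ↔
      ∃ l : List G, (∀ a ∈ l, a ∈ S) ∧ g = l.prod ∧ l.length = n := by
  constructor
  · rintro ⟨w, hw, rfl⟩
    refine ⟨List.ofFn w, ?_, rfl, List.length_ofFn⟩
    intro a ha
    rw [List.mem_ofFn] at ha
    obtain ⟨i, rfl⟩ := ha
    exact hw i
  · rintro ⟨l, hl, rfl, rfl⟩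
    exact ⟨l.get, fun i => hl _ (l.get_mem _), by rw [List.ofFn_get]⟩

lemma wordSet_nonempty (hsym : S⁻¹ = S) (hgen : Subgroup.closure S = ⊤) (g : G) :
    {n | ∃ w : Fin n → G, (∀ i, w i ∈ S) ∧ g = (List.ofFn w).prod}.Nonempty := by
  have hg : g ∈ Submonoid.closure S := by
    have h1 : g ∈ (Subgroup.closure S).toSubmonoid := by simp [hgen, Subgroup.mem_toSubmonoid]
    rwa [Subgroup.closure_toSubmonoid, hsym, Set.union_self] at h1
  obtain ⟨l, hl, hlp⟩ := Submonoid.exists_list_of_mem_closure hg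
  exact ⟨l.length, mem_wordSet_iff.2 ⟨l, hl, hlp.symm, rfl⟩⟩

lemma wordLength_spec (hsym : S⁻¹ = S) (hgen : Subgroup.closure S = ⊤) (g : G) :
    ∃ l : List G, (∀ a ∈ l, a ∈ S) ∧ g = l.prod ∧ l.length = wordLength S g :=
  mem_wordSet_iff.1 (Nat.sInf_mem (wordSet_nonempty hsym hgen g))

lemma wordLength_le {g : G} {l : List G} (hl : ∀ a ∈ l, a ∈ S) (hp : g = l.prod) :
    wordLength S g ≤ l.length :=
  Nat.sInf_le (mem_wordSet_iff.2 ⟨l, hl, hp, rfl⟩)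

lemma wordLength_mul_le (hsym : S⁻¹ = S) (hgen : Subgroup.closure S = ⊤) (g h : G) :
    wordLength S (g * h) ≤ wordLength S g + wordLength S h := by
  obtain ⟨l, hl, rfl, hll⟩ := wordLength_spec hsym hgen g
  obtain ⟨l', hl', rfl, hll'⟩ := wordLength_spec hsym hgen h
  calc wordLength S (l.prod * l'.prod) ≤ (l ++ l').length :=
        wordLength_le (by simp only [List.mem_append]; rintro a (ha | ha); exacts [hl a ha, hl' a ha])
          (by rw [List.prod_append])
    _ = _ := by rw [List.length_append, hll, hll']

lemma wordLength_inv (hsym : S⁻¹ = S) (hgen : Subgroup.closure S = ⊤) (g : G) :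
    wordLength S g⁻¹ = wordLength S g := by
  have key : ∀ a : G, wordLength S a⁻¹ ≤ wordLength S a := by
    intro a
    obtain ⟨l, hl, rfl, hll⟩ := wordLength_spec hsym hgen a
    have : wordLength S l.prod⁻¹ ≤ ((l.map fun x => x⁻¹).reverse).length :=
      wordLength_le (fun b hb => by
        simp only [List.mem_reverse, List.mem_map] at hb
        obtain ⟨c, hc, rfl⟩ := hb
        rw [← hsym]; exact Set.inv_mem_inv.2 (hl c hc)) (List.prod_inv_reverse l)
    simpa [hll] using this
  exact le_antisymm (key g) (by simpa using key g⁻¹)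

lemma finite_sphere (hsym : S⁻¹ = S) (hgen : Subgroup.closure S = ⊤) (hS : S.Finite) (k : ℕ) :
    Finite {g : G // wordLength S g = k} := by
  have : ∀ g : {g : G // wordLength S g = k}, ∃ w : Fin k → S, (g : G) = (List.ofFn fun i => ((w i : G))).prod := by
    rintro ⟨g, hg⟩
    obtain ⟨l, hl, rfl, hll⟩ := wordLength_spec hsym hgen g
    rw [hg] at hll
    subst hll
    exact ⟨fun i => ⟨l.get i, hl _ (l.get_mem _)⟩, by rw [List.ofFn_get]⟩
  choose w hw using this
  have : Finite S := hS
  refine Finite.of_injective w fun g g' hgg => ?_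
  ext
  rw [hw g, hw g', hgg]
end WL

section Coc
variable {G X : Type*} [Group G] [TopologicalSpace X] [CompactSpace X]
  [MulAction G X] [ContinuousConstSMul G X]
  (Ω : G → X → ℝ) (hΩcont : ∀ g : G, Continuous (Ω g))
  (hΩ : ∀ (g h : G) (x : X), Ω g (h • x) + Ω h x = Ω (g * h) x)

include hΩ in
lemma omega_one (y : X) : Ω 1 y = 0 := by
  have := hΩ 1 1 y
  rw [one_smul, mul_one] at this
  linarith

include hΩcont hΩ in
lemma omega_list_bound (S : Finset G)
    (wordLength_spec : ∀ g : G, ∃ l : List G, (∀ a ∈ l, a ∈ (S : Set G)) ∧ g = l.prod ∧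
      l.length = wordLength (S : Set G) g) :
    ∃ C ≥ (0:ℝ), ∀ (g : G) (y : X), |Ω g y| ≤ C * wordLength (S : Set G) g := by
  set C : ℝ := ∑ a ∈ S, ‖(⟨Ω a, hΩcont a⟩ : C(X, ℝ))‖ with hC
  have hC0 : 0 ≤ C := Finset.sum_nonneg fun a _ => norm_nonneg _
  have hCa : ∀ a ∈ S, ∀ y : X, |Ω a y| ≤ C := by
    intro a ha y
    calc |Ω a y| ≤ ‖(⟨Ω a, hΩcont a⟩ : C(X, ℝ))‖ := by
          simpa using (⟨Ω a, hΩcont a⟩ : C(X, ℝ)).norm_coe_le_norm y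
      _ ≤ C := Finset.single_le_sum (f := fun a : G => ‖(⟨Ω a, hΩcont a⟩ : C(X, ℝ))‖)
          (fun a _ => norm_nonneg _) ha
  have key : ∀ l : List G, (∀ a ∈ l, a ∈ (S : Set G)) → ∀ y : X,
      |Ω l.prod y| ≤ C * l.length := by
    intro l
    induction l with
    | nil => intro _ y; simp [omega_one Ω hΩ y]
    | cons a l ih =>
      intro hmem y
      have h1 : Ω a (l.prod • y) + Ω l.prod y = Ω (a * l.prod) y := hΩ a l.prod y
      rw [List.prod_cons, ← h1]
      have h2 := hCa a (hmem a List.mem_cons_self) (l.prod • y)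
      have h3 := ih (fun b hb => hmem b (List.mem_cons_of_mem a hb)) y
      have : |Ω a (l.prod • y) + Ω l.prod y| ≤ |Ω a (l.prod • y)| + |Ω l.prod y| := abs_add_le _ _
      simp only [List.length_cons]
      push_cast
      nlinarith
  refine ⟨C, hC0, fun g y => ?_⟩
  obtain ⟨l, hl, rfl, hll⟩ := wordLength_spec g
  rw [← hll]
  exact key l hl y

end Coc

lemma summable_aux {G : Type*} (ℓ : G → ℕ)(u : G → ℝ)
    (hfin : ∀ k, Finite {g : G // ℓ g = k})
    (hcard : ∀ ε > (0:ℝ), ∀ᶠ k in atTop, (Nat.card {g : G // ℓ g = k} : ℝ) ≤ (1+ε)^k)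
    (hub : ∀ ε > (0:ℝ), ∃ N : ℕ, ∀ g, N ≤ ℓ g → u g ≤ ε * ℓ g)
    (s : ℝ) (hs : 0 < s) :
    Summable fun g : G => Real.exp (u g - (ℓ g : ℝ) * s) := by
  set a : G → ℝ := fun g => Real.exp (u g - (ℓ g : ℝ) * s) with ha
  rw [← (Equiv.sigmaFiberEquiv ℓ).summable_iff]
  refine (summable_sigma_of_nonneg fun p => (Real.exp_pos _).le).2 ⟨fun k => ?_, ?_⟩
  · have := hfin k
    exact Summable.of_finite
  · obtain ⟨N1, hN1⟩ := hub (s/4) (by positivity)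
    have hε' : (0:ℝ) < Real.exp (s/4) - 1 := by
      have := Real.one_lt_exp_iff.2 (by positivity : (0:ℝ) < s/4); linarith
    obtain ⟨N2, hN2⟩ := eventually_atTop.1 (hcard _ hε')
    set K := max N1 N2 with hK
    set r := Real.exp (-(s/2)) with hr
    have hr0 : 0 ≤ r := Real.exp_nonneg _
    have hr1 : r < 1 := Real.exp_lt_one_iff.2 (by linarith)
    have hT : ∀ k, K ≤ k → (∑' g : {g : G // ℓ g = k}, a g.1) ≤ r ^ k := by
      intro k hk
      have := hfin k
      haveI : Fintype {g : G // ℓ g = k} := Fintype.ofFinite _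
      rw [tsum_fintype]
      have hbound : ∀ g : {g : G // ℓ g = k}, a g.1 ≤ Real.exp ((s/4) * k - k * s) := by
        rintro ⟨g, hg⟩
        apply Real.exp_le_exp.2
        have h1 : u g ≤ (s/4) * ℓ g := hN1 g (hg ▸ le_trans (le_max_left _ _) hk)
        rw [hg] at h1 ⊢
        linarith
      calc (∑ g : {g : G // ℓ g = k}, a g.1)
          ≤ Fintype.card {g : G // ℓ g = k} • Real.exp ((s/4) * k - k * s) :=
            Finset.sum_le_card_nsmul _ _ _ (fun g _ => hbound g)
        _ = (Nat.card {g : G // ℓ g = k} : ℝ) * Real.exp ((s/4) * k - k * s) := by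
            rw [nsmul_eq_mul, Nat.card_eq_fintype_card]
        _ ≤ (1 + (Real.exp (s/4) - 1))^k * Real.exp ((s/4) * k - k * s) :=
            mul_le_mul_of_nonneg_right (hN2 k (le_trans (le_max_right _ _) hk))
              (Real.exp_nonneg _)
        _ = Real.exp ((s/4) * k) * Real.exp ((s/4) * k - k * s) := by
            have h9 : (1:ℝ) + (Real.exp (s/4) - 1) = Real.exp (s/4) := by ring
            rw [h9, ← Real.exp_nat_mul, mul_comm (k:ℝ)]
        _ = r ^ k := by
            rw [← Real.exp_add, ← Real.exp_nat_mul]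
            congr 1; ring
    rw [← summable_nat_add_iff K]
    refine Summable.of_nonneg_of_le (fun n => tsum_nonneg fun g => (Real.exp_pos _).le)
      (fun n => hT (n + K) (by omega)) ?_
    simpa [pow_add] using (summable_geometric_of_lt_one hr0 hr1).mul_right (r ^ K)

lemma eventual_ratio {G : Type*} (ℓ : G → ℕ) (u : G → ℝ) (C : ℝ)
    (hb : ∀ g, |u g| ≤ C * ℓ g)
    (hx : Filter.limsup (fun g => u g / (ℓ g : ℝ)) (Filter.comap ℓ atTop) ≤ 0) :
    ∀ ε > (0:ℝ), ∃ N : ℕ, ∀ g, N ≤ ℓ g → u g ≤ ε * ℓ g := by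
  intro ε hε
  have hbd : IsBoundedUnder (· ≤ ·) (Filter.comap ℓ atTop) (fun g => u g / (ℓ g : ℝ)) := by
    refine isBoundedUnder_of ⟨|C| + 1, fun g => ?_⟩
    rcases Nat.eq_zero_or_pos (ℓ g) with h0 | hpos
    · simp only [h0, Nat.cast_zero, div_zero]; positivity
    · have h1 : u g ≤ C * ℓ g := (abs_le.1 (hb g)).2
      have h2 : (0:ℝ) < ℓ g := by exact_mod_cast hpos
      rw [div_le_iff₀ h2]
      nlinarith [le_abs_self C, abs_nonneg C]
  have hev := eventually_lt_of_limsup_lt (lt_of_le_of_lt hx hε) hbd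
  rw [eventually_comap] at hev
  obtain ⟨N, hN⟩ := eventually_atTop.1 hev
  refine ⟨max N 1, fun g hg => ?_⟩
  have h2 : (0:ℝ) < ℓ g := by
    have : 1 ≤ ℓ g := le_trans (le_max_right N 1) hg
    exact_mod_cast this
  have h3 := hN (ℓ g) (le_trans (le_max_left _ _) hg) g rfl
  rw [div_lt_iff₀ h2] at h3
  linarith [mul_comm ε ((ℓ g : ℝ))]

lemma estimate_aux {G X : Type*} [Group G] [TopologicalSpace X] [CompactSpace X] [MulAction G X]
    (Ω : G → X → ℝ) (β : ℝ) (ℓ : G → ℕ) (x : X) (s : ℝ) (hs : 0 < s)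
    (hΩ : ∀ (g h : G) (x : X), Ω g (h • x) + Ω h x = Ω (g * h) x)
    (hℓsub : ∀ g h : G, ℓ (g * h) ≤ ℓ g + ℓ h) (hℓinv : ∀ g : G, ℓ g⁻¹ = ℓ g)
    (hsum : Summable fun g : G => Real.exp (β * Ω g x - (ℓ g : ℝ) * s))
    (h : G) (f : C(X, ℝ)) :
    |msIntegral Ω β ℓ x s (fun y => f (h • y) * Real.exp (β * Ω h y)) -
        msIntegral Ω β ℓ x s f| ≤ ‖f‖ * (Real.exp ((ℓ h : ℝ) * s) - 1) := by
  set a : G → ℝ := fun g => Real.exp (β * Ω g x - (ℓ g : ℝ) * s) with ha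
  have hapos : ∀ g, 0 < a g := fun g => Real.exp_pos _
  have hc : 0 < ∑' g, a g := Summable.tsum_pos hsum (fun g => (hapos g).le) 1 (hapos 1)
  set c : ℝ := ∑' g, a g with hcdef
  set L : ℝ := (ℓ h : ℝ) with hL
  have hL0 : (0:ℝ) ≤ L := Nat.cast_nonneg _
  have hEL : 1 ≤ Real.exp (L * s) := Real.one_le_exp (by positivity)
  have hdiff : ∀ g : G, |(ℓ g : ℝ) - (ℓ (h⁻¹ * g) : ℝ)| ≤ L := by
    intro g
    have t1 : ℓ (h⁻¹ * g) ≤ ℓ h + ℓ g := by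
      have := hℓsub h⁻¹ g; rwa [hℓinv h] at this
    have t2 : ℓ g ≤ ℓ h + ℓ (h⁻¹ * g) := by
      have := hℓsub h (h⁻¹ * g); rwa [mul_inv_cancel_left] at this
    rw [abs_le]
    constructor
    · have : (ℓ (h⁻¹ * g) : ℝ) ≤ (ℓ h : ℝ) + ℓ g := by exact_mod_cast t1
      rw [hL]; linarith
    · have : (ℓ g : ℝ) ≤ (ℓ h : ℝ) + ℓ (h⁻¹ * g) := by exact_mod_cast t2
      rw [hL]; linarith
  have hexp : ∀ t : ℝ, |t| ≤ L * s → |Real.exp t - 1| ≤ Real.exp (L * s) - 1 := by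
    intro t ht
    rw [abs_le] at ht ⊢
    have h3 : (0:ℝ) < Real.exp (L * s) := Real.exp_pos _
    constructor
    · have h1 : Real.exp (-(L * s)) ≤ Real.exp t := Real.exp_le_exp.2 (by linarith)
      have h2 : Real.exp (-(L * s)) * Real.exp (L * s) = 1 := by
        rw [← Real.exp_add]; simp
      nlinarith [sq_nonneg (Real.exp (L * s) - 1)]
    · have := Real.exp_le_exp.2 ht.2; linarith
  set u : G → ℝ := fun g => Real.exp (β * Ω g x - (ℓ (h⁻¹ * g) : ℝ) * s) * f (g • x) with hu
  set v : G → ℝ := fun g => a g * f (g • x) with hv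
  have hfb : ∀ y : X, |f y| ≤ ‖f‖ := fun y => by
    simpa [Real.norm_eq_abs] using f.norm_coe_le_norm y
  have hexp2 : ∀ g : G, Real.exp (β * Ω g x - (ℓ (h⁻¹ * g) : ℝ) * s) =
      a g * Real.exp (((ℓ g : ℝ) - (ℓ (h⁻¹ * g) : ℝ)) * s) := by
    intro g
    rw [ha]; dsimp only; rw [← Real.exp_add]; congr 1; ring
  have hfac : ∀ g : G, |Real.exp (((ℓ g : ℝ) - (ℓ (h⁻¹ * g) : ℝ)) * s) - 1| ≤
      Real.exp (L * s) - 1 := by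
    intro g
    refine hexp _ ?_
    rw [abs_mul, abs_of_pos hs]
    exact mul_le_mul_of_nonneg_right (hdiff g) hs.le
  have hub : ∀ g : G, |u g - v g| ≤ a g * ((Real.exp (L * s) - 1) * ‖f‖) := by
    intro g
    have e1 : u g - v g =
        a g * (Real.exp (((ℓ g : ℝ) - (ℓ (h⁻¹ * g) : ℝ)) * s) - 1) * f (g • x) := by
      rw [hu, hv]; dsimp only; rw [hexp2 g]; ring
    rw [e1, abs_mul, abs_mul, abs_of_pos (hapos g), mul_assoc]
    gcongr
    · exact hfac g
    · exact hfb _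
  have hsv : Summable v := by
    refine Summable.of_norm_bounded (g := fun g => a g * ‖f‖) (hsum.mul_right ‖f‖) fun g => ?_
    rw [hv]; dsimp only
    rw [norm_mul, Real.norm_eq_abs, Real.norm_eq_abs, abs_of_pos (hapos g)]
    exact mul_le_mul_of_nonneg_left (hfb _) (hapos g).le
  have hsu : Summable u := by
    refine Summable.of_norm_bounded (g := fun g => a g * (Real.exp (L * s) * ‖f‖))
      ((hsum.mul_right _)) fun g => ?_
    rw [hu]; dsimp only
    rw [norm_mul, Real.norm_eq_abs, Real.norm_eq_abs, abs_of_pos (Real.exp_pos _), hexp2 g,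
      mul_assoc]
    have h5 : Real.exp (((ℓ g : ℝ) - (ℓ (h⁻¹ * g) : ℝ)) * s) ≤ Real.exp (L * s) :=
      Real.exp_le_exp.2 (mul_le_mul_of_nonneg_right (le_trans (le_abs_self _) (hdiff g)) hs.le)
    gcongr
    exact hfb _
  have hsb : Summable fun g => ‖u g - v g‖ := by
    refine Summable.of_nonneg_of_le (fun g => norm_nonneg _)
      (fun g => ?_) (hsum.mul_right ((Real.exp (L * s) - 1) * ‖f‖))
    rw [Real.norm_eq_abs]; exact hub g
  have hnum : (∑' g : G, a g * (f (h • (g • x)) * Real.exp (β * Ω h (g • x)))) = ∑' g, u g := by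
    have e2 : ∀ g : G, a g * (f (h • (g • x)) * Real.exp (β * Ω h (g • x))) = u (h * g) := by
      intro g
      rw [hu]; dsimp only
      rw [inv_mul_cancel_left, mul_smul]
      have e3 : Real.exp (β * Ω (h * g) x - (ℓ g : ℝ) * s) =
          Real.exp (β * Ω g x - (ℓ g : ℝ) * s) * Real.exp (β * Ω h (g • x)) := by
        rw [← Real.exp_add]; congr 1
        rw [← hΩ h g x]; ring
      rw [e3, ha]; ring
    calc (∑' g : G, a g * (f (h • (g • x)) * Real.exp (β * Ω h (g • x))))
        = ∑' g : G, u (h * g) := tsum_congr e2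
      _ = ∑' g, u g := by
          simpa [Equiv.coe_mulLeft] using (Equiv.mulLeft h).tsum_eq u
  have hA : |(∑' g, u g) - ∑' g, v g| ≤ (Real.exp (L * s) - 1) * ‖f‖ * c := by
    calc |(∑' g, u g) - ∑' g, v g| = |∑' g, (u g - v g)| := by rw [Summable.tsum_sub hsu hsv]
      _ ≤ ∑' g, ‖u g - v g‖ := by
          simpa [Real.norm_eq_abs] using norm_tsum_le_tsum_norm hsb
      _ ≤ ∑' g, a g * ((Real.exp (L * s) - 1) * ‖f‖) :=
          Summable.tsum_le_tsum (fun g => by rw [Real.norm_eq_abs]; exact hub g) hsb (hsum.mul_right _)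
      _ = (Real.exp (L * s) - 1) * ‖f‖ * c := by rw [tsum_mul_right]; ring
  have hfinal : msIntegral Ω β ℓ x s (fun y => f (h • y) * Real.exp (β * Ω h y)) -
      msIntegral Ω β ℓ x s f = c⁻¹ * ((∑' g, u g) - ∑' g, v g) := by
    unfold msIntegral
    rw [mul_sub]
    congr 2
  rw [hfinal, abs_mul, abs_of_pos (inv_pos.2 hc)]
  calc c⁻¹ * |(∑' g, u g) - ∑' g, v g| ≤ c⁻¹ * ((Real.exp (L * s) - 1) * ‖f‖ * c) :=
        mul_le_mul_of_nonneg_left hA (inv_pos.2 hc).le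
    _ = ‖f‖ * (Real.exp (L * s) - 1) := by field_simp


/-- If `limsup_{g→∞} β·Ω(g,x)/|g| ≤ 0` at some point `x`, then the
series defining `m_s` converge, the measures `m_s` are approximately conformal with the
explicit error bound, and any weak* limit point of `(m_s)` as `s → 0` is an
`e^{β·Ω}`-conformal probability measure. -/
theorem conformal_measure_from_limsup
    {G X : Type*} [Group G] [Countable G] [TopologicalSpace X] [CompactSpace X]
    [TopologicalSpace.MetrizableSpace X] [MeasurableSpace X] [BorelSpace X]
    [MulAction G X] [ContinuousConstSMul G X]
    (S : Finset G) (hsym : (S : Set G)⁻¹ = (S : Set G))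
    (hgen : Subgroup.closure (S : Set G) = ⊤)
    (hgrowth : ∀ ε > (0 : ℝ), ∀ᶠ k in atTop,
      (Nat.card {g : G // wordLength (S : Set G) g = k} : ℝ) ≤ (1 + ε) ^ k)
    (Ω : G → X → ℝ) (hΩcont : ∀ g : G, Continuous (Ω g))
    (hΩ : ∀ (g h : G) (x : X), Ω g (h • x) + Ω h x = Ω (g * h) x)
    (β : ℝ) (x : X)
    (hx : Filter.limsup (fun g : G => β * Ω g x / (wordLength (S : Set G) g : ℝ))
      (Filter.comap (fun g : G => wordLength (S : Set G) g) Filter.atTop) ≤ 0) :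
    (∀ s > (0 : ℝ),
      Summable fun g : G =>
        Real.exp (β * Ω g x - (wordLength (S : Set G) g : ℝ) * s)) ∧
    (∀ s > (0 : ℝ), ∀ h : G, ∀ f : C(X, ℝ),
      |msIntegral Ω β (wordLength (S : Set G)) x s
          (fun y => f (h • y) * Real.exp (β * Ω h y)) -
        msIntegral Ω β (wordLength (S : Set G)) x s f| ≤
      ‖f‖ * (Real.exp ((wordLength (S : Set G) h : ℝ) * s) - 1)) ∧
    (∀ sq : ℕ → ℝ, (∀ k, 0 < sq k) → Tendsto sq atTop (𝓝 0) →
      ∀ m : Measure X, IsProbabilityMeasure m →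
      (∀ f : C(X, ℝ),
        Tendsto (fun k => msIntegral Ω β (wordLength (S : Set G)) x (sq k) f)
          atTop (𝓝 (∫ y, f y ∂m))) →
      ConformalMeasure Ω β m) := by

  classical
  have hsym' : (S : Set G)⁻¹ = (S : Set G) := hsym
  set ℓ : G → ℕ := wordLength (S : Set G) with hℓ
  have hspec : ∀ g : G, ∃ l : List G, (∀ a ∈ l, a ∈ (S : Set G)) ∧ g = l.prod ∧
      l.length = wordLength (S : Set G) g := fun g => wordLength_spec hsym' hgen g
  have hsub : ∀ g h : G, ℓ (g * h) ≤ ℓ g + ℓ h := fun g h => wordLength_mul_le hsym' hgen g h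
  have hinv : ∀ g : G, ℓ g⁻¹ = ℓ g := fun g => wordLength_inv hsym' hgen g
  obtain ⟨C, hC0, hCb⟩ := omega_list_bound Ω hΩcont hΩ S hspec
  have hfin : ∀ k, Finite {g : G // ℓ g = k} := fun k =>
    finite_sphere hsym' hgen S.finite_toSet k
  have hub : ∀ ε > (0:ℝ), ∃ N : ℕ, ∀ g, N ≤ ℓ g → β * Ω g x ≤ ε * ℓ g := by
    refine eventual_ratio ℓ (fun g => β * Ω g x) (|β| * C) (fun g => ?_) hx
    calc |β * Ω g x| = |β| * |Ω g x| := abs_mul _ _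
      _ ≤ |β| * (C * ℓ g) := mul_le_mul_of_nonneg_left (hCb g x) (abs_nonneg β)
      _ = (|β| * C) * ℓ g := by ring
  have part1 : ∀ s > (0:ℝ), Summable fun g : G =>
      Real.exp (β * Ω g x - (wordLength (S : Set G) g : ℝ) * s) := fun s hs =>
    summable_aux ℓ (fun g => β * Ω g x) hfin hgrowth hub s hs
  have part2 : ∀ s > (0:ℝ), ∀ h : G, ∀ f : C(X, ℝ),
      |msIntegral Ω β (wordLength (S : Set G)) x s
          (fun y => f (h • y) * Real.exp (β * Ω h y)) -
        msIntegral Ω β (wordLength (S : Set G)) x s f| ≤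
      ‖f‖ * (Real.exp ((wordLength (S : Set G) h : ℝ) * s) - 1) := fun s hs h f =>
    estimate_aux Ω β ℓ x s hs hΩ hsub hinv (part1 s hs) h f
  refine ⟨part1, part2, ?_⟩
  intro sq hsqpos hsqlim m hm hconv g f
  set F : C(X, ℝ) := ⟨fun y => f (g • y) * Real.exp (β * Ω g y),
    (f.continuous.comp (continuous_const_smul g)).mul
      (Real.continuous_exp.comp (continuous_const.mul (hΩcont g)))⟩ with hF
  have h1 := hconv F
  have h2 := hconv f
  have hb : ∀ k, |msIntegral Ω β (wordLength (S : Set G)) x (sq k) F -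
      msIntegral Ω β (wordLength (S : Set G)) x (sq k) f| ≤
      ‖f‖ * (Real.exp ((wordLength (S : Set G) g : ℝ) * sq k) - 1) := fun k =>
    part2 (sq k) (hsqpos k) g f
  have hlim0 : Tendsto (fun k => ‖f‖ *
      (Real.exp ((wordLength (S : Set G) g : ℝ) * sq k) - 1)) atTop (𝓝 0) := by
    have h3 : Tendsto (fun k => (wordLength (S : Set G) g : ℝ) * sq k) atTop (𝓝 0) := by
      simpa using hsqlim.const_mul (wordLength (S : Set G) g : ℝ)
    have h4 : Tendsto (fun k => Real.exp ((wordLength (S : Set G) g : ℝ) * sq k) - 1)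
        atTop (𝓝 0) := by
      have h5 := (Real.continuous_exp.tendsto 0).comp h3
      have h6 := h5.sub (tendsto_const_nhds (α := ℕ) (f := atTop) (x := (1:ℝ)))
      simpa [Real.exp_zero] using h6
    simpa using h4.const_mul ‖f‖
  have hdiff : Tendsto (fun k => msIntegral Ω β (wordLength (S : Set G)) x (sq k) F -
      msIntegral Ω β (wordLength (S : Set G)) x (sq k) f) atTop
      (𝓝 ((∫ y, F y ∂m) - ∫ y, f y ∂m)) := h1.sub h2
  have hzero : Tendsto (fun k => msIntegral Ω β (wordLength (S : Set G)) x (sq k) F -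
      msIntegral Ω β (wordLength (S : Set G)) x (sq k) f) atTop (𝓝 0) :=
    squeeze_zero_norm (fun k => by simpa [Real.norm_eq_abs] using hb k) hlim0
  have heq : (∫ y, F y ∂m) - ∫ y, f y ∂m = 0 := tendsto_nhds_unique hdiff hzero
  have heq2 : (∫ y, F y ∂m) = ∫ y, f y ∂m := by linarith
  simpa [hF] using heq2
end

section
/- Let 𝓡 ⊂ C₀(ℝ, (0,∞)) be the set of functions of the form r(β) = (Σ_{i=1}^N a_i^β)/(Σ_{j=1}^M b_j^β) with N, M ∈ ℕ, a_i, b_j ∈ (0,∞), max_j b_j > max_i a_i, and min_j b_j < min_i a_i. Then 𝓡 is dense in C₀(ℝ, [0,∞)) with respect to the uniform norm. -/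
open Filter Topology
open scoped unitInterval

private lemma repeat_family' {K : ℕ} (c : Fin K → ℕ) (x : Fin K → ℝ) :
    ∃ (N : ℕ) (a : Fin N → ℝ),
      (∀ i, ∃ k, 0 < c k ∧ a i = x k) ∧
      (∀ k, 0 < c k → ∃ i, a i = x k) ∧
      (∀ β : ℝ, ∑ i, a i ^ β = ∑ k, (c k : ℝ) * x k ^ β) := by
  classical
  set T := Σ k : Fin K, Fin (c k)
  let e : Fin (Fintype.card T) ≃ T := (Fintype.equivFin T).symm
  refine ⟨Fintype.card T, fun i => x (e i).1, ?_, ?_, ?_⟩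
  · intro i
    exact ⟨(e i).1, Fin.pos_iff_nonempty.mpr ⟨(e i).2⟩ , rfl⟩
  · intro k hk
    exact ⟨e.symm ⟨k, ⟨0, hk⟩⟩, by simp⟩
  · intro β
    have := e.sum_comp (fun t : T => x t.1 ^ β)
    simp only at this ⊢
    rw [this]
    rw [← Finset.univ_sigma_univ, Finset.sum_sigma]
    simp [mul_comm]

private lemma ext_cont_lemma (f : ℝ → ℝ) (hfcont : Continuous f)
    (hfzero : Tendsto f (cocompact ℝ) (nhds 0)) :
    Continuous (fun t : ℝ => if 0 < t ∧ t < 1 then f (Real.logb 4 (t/(1-t))) else 0) := by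
  set G : ℝ → ℝ := fun t : ℝ => if 0 < t ∧ t < 1 then f (Real.logb 4 (t/(1-t))) else 0 with hG
  have hbot : Tendsto f atBot (𝓝 0) := hfzero.mono_left (by rw [cocompact_eq_atBot_atTop]; exact le_sup_left)
  have htop : Tendsto f atTop (𝓝 0) := hfzero.mono_left (by rw [cocompact_eq_atBot_atTop]; exact le_sup_right)
  have hzero : ∀ t : ℝ, ¬ (0 < t ∧ t < 1) → G t = 0 := fun t ht => if_neg ht
  have hcompl : ∀ u : ℝ, Tendsto G (𝓝[(Set.Ioo (0:ℝ) 1)ᶜ] u) (𝓝 0) := by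
    intro u
    refine Tendsto.congr' ?_ tendsto_const_nhds
    filter_upwards [self_mem_nhdsWithin] with t ht
    exact (hzero t (by simpa [Set.mem_Ioo] using ht)).symm
  have hsplit : ∀ u : ℝ, 𝓝 u = 𝓝[Set.Ioo (0:ℝ) 1] u ⊔ 𝓝[(Set.Ioo (0:ℝ) 1)ᶜ] u := by
    intro u
    rw [← nhdsWithin_union, Set.union_compl_self, nhdsWithin_univ]
  have hGin : ∀ t ∈ Set.Ioo (0:ℝ) 1, G t = f (Real.logb 4 (t/(1-t))) := by
    intro t ht; exact if_pos ⟨ht.1, ht.2⟩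
  rw [continuous_iff_continuousAt]
  intro u
  rcases lt_trichotomy u 0 with hu | hu | hu
  · have : ∀ᶠ t in 𝓝 u, G t = 0 := by
      filter_upwards [eventually_lt_nhds hu] with t ht
      exact hzero t (by intro h; linarith [h.1])
    exact (continuousAt_const (y := (0:ℝ))).congr (this.mono fun t ht => ht.symm) |>.congr (by filter_upwards [] with t; rfl)
  · subst hu
    have hG0 : G 0 = 0 := hzero 0 (by norm_num)
    rw [ContinuousAt, hG0]
    refine (tendsto_sup.mpr ⟨?_, ?_⟩).mono_left (le_of_eq (hsplit 0))
    · have h1 : Tendsto (fun t : ℝ => t/(1-t)) (𝓝[Set.Ioo (0:ℝ) 1] 0) (𝓝[>] 0) := by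
        apply tendsto_nhdsWithin_of_tendsto_nhds_of_eventually_within
        · have : Tendsto (fun t : ℝ => t/(1-t)) (𝓝 0) (𝓝 (0/(1-0))) := by
            apply Tendsto.div tendsto_id (tendsto_const_nhds.sub tendsto_id); norm_num
          simpa using this.mono_left nhdsWithin_le_nhds
        · filter_upwards [self_mem_nhdsWithin] with t ht
          exact div_pos ht.1 (by linarith [ht.2])
      have h2 : Tendsto (fun t : ℝ => Real.logb 4 (t/(1-t))) (𝓝[Set.Ioo (0:ℝ) 1] 0) atBot := by
        have := (Real.tendsto_log_nhdsGT_zero).comp h1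
        have hlog4 : (0:ℝ) < Real.log 4 := Real.log_pos (by norm_num)
        exact Tendsto.atBot_div_const hlog4 this
      have := (hbot.comp h2)
      refine this.congr' ?_
      filter_upwards [self_mem_nhdsWithin] with t ht
      exact (hGin t ht).symm
    · exact hcompl 0
  · rcases lt_trichotomy u 1 with hu1 | hu1 | hu1
    · have hmem : Set.Ioo (0:ℝ) 1 ∈ 𝓝 u := Ioo_mem_nhds hu hu1
      have hc : ContinuousAt (fun t : ℝ => f (Real.logb 4 (t/(1-t)))) u := by
        apply hfcont.continuousAt.comp
        unfold Real.logb
        apply ContinuousAt.div_const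
        apply (Real.continuousAt_log ?_).comp
        · exact (continuousAt_id.div (continuousAt_const.sub continuousAt_id) (sub_ne_zero.mpr (by linarith)))
        · exact ne_of_gt (div_pos hu (by linarith))
      refine hc.congr ?_
      filter_upwards [hmem] with t ht
      exact (hGin t ht).symm
    · subst hu1
      have hG1 : G 1 = 0 := hzero 1 (by norm_num)
      rw [ContinuousAt, hG1]
      refine (tendsto_sup.mpr ⟨?_, ?_⟩).mono_left (le_of_eq (hsplit 1))
      · have h1 : Tendsto (fun t : ℝ => t/(1-t)) (𝓝[Set.Ioo (0:ℝ) 1] 1) atTop := by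
          have hnum : Tendsto (fun t : ℝ => t) (𝓝[Set.Ioo (0:ℝ) 1] 1) (𝓝 1) := tendsto_id.mono_left nhdsWithin_le_nhds
          have hden : Tendsto (fun t : ℝ => (1-t)⁻¹) (𝓝[Set.Ioo (0:ℝ) 1] 1) atTop := by
            apply Filter.Tendsto.inv_tendsto_nhdsGT_zero
            apply tendsto_nhdsWithin_of_tendsto_nhds_of_eventually_within
            · have : Tendsto (fun t : ℝ => 1 - t) (𝓝 1) (𝓝 (1-1)) := tendsto_const_nhds.sub tendsto_id
              simpa using this.mono_left nhdsWithin_le_nhds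
            · filter_upwards [self_mem_nhdsWithin] with t ht
              have : (0:ℝ) < 1 - t := by linarith [ht.2]
              exact this
          have h3 := Filter.Tendsto.pos_mul_atTop one_pos hnum hden
          refine h3.congr fun t => ?_
          rw [div_eq_mul_inv]
        have h2 : Tendsto (fun t : ℝ => Real.logb 4 (t/(1-t))) (𝓝[Set.Ioo (0:ℝ) 1] 1) atTop := by
          have := Real.tendsto_log_atTop.comp h1
          have hlog4 : (0:ℝ) < Real.log 4 := Real.log_pos (by norm_num)
          exact Tendsto.atTop_div_const hlog4 this
        refine (htop.comp h2).congr' ?_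
        filter_upwards [self_mem_nhdsWithin] with t ht
        exact (hGin t ht).symm
      · exact hcompl 1
    · have : ∀ᶠ t in 𝓝 u, G t = 0 := by
        filter_upwards [eventually_gt_nhds hu1] with t ht
        exact hzero t (by intro h; linarith [h.2])
      exact ContinuousAt.congr continuousAt_const (this.mono fun t ht => ht.symm)

private lemma pow_rpow_helper (k : ℕ) (β : ℝ) : (((4:ℝ)^k : ℝ)) ^ β = ((4:ℝ)^β) ^ k := by
  rw [← Real.rpow_natCast (4:ℝ) k, ← Real.rpow_natCast ((4:ℝ)^β) k,
    ← Real.rpow_mul (by norm_num : (0:ℝ) ≤ 4), ← Real.rpow_mul (by norm_num : (0:ℝ) ≤ 4),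
    mul_comm]

/-- **Lemma on the class 𝓡.** The functions
`β ↦ (Σᵢ aᵢ^β)/(Σⱼ bⱼ^β)` with `max bⱼ > max aᵢ` and `min bⱼ < min aᵢ` are uniformly
dense in `C₀(ℝ, [0,∞))`. -/
theorem dense_rational_exponential_fractions
    (f : ℝ → ℝ) (hfcont : Continuous f) (hfpos : ∀ x, 0 ≤ f x)
    (hfzero : Tendsto f (cocompact ℝ) (nhds 0)) :
    ∀ ε > (0 : ℝ), ∃ (N M : ℕ) (a : Fin N → ℝ) (b : Fin M → ℝ),
      0 < N ∧ 0 < M ∧ (∀ i, 0 < a i) ∧ (∀ j, 0 < b j) ∧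
      (∃ j, ∀ i, a i < b j) ∧ (∃ j, ∀ i, b j < a i) ∧
      ∀ β : ℝ, |f β - (∑ i, a i ^ β) / (∑ j, b j ^ β)| ≤ ε := by
  intro ε hε
  classical
  set G : ℝ → ℝ := fun t : ℝ => if 0 < t ∧ t < 1 then f (Real.logb 4 (t/(1-t))) else 0 with hGdef
  have hGcont : Continuous G := ext_cont_lemma f hfcont hfzero
  let g : C(I, ℝ) := ⟨fun t => G t.val, hGcont.comp continuous_subtype_val⟩
  have hgval : ∀ t : I, g t = G (t : ℝ) := fun t => rfl
  have hgnn : ∀ t : I, 0 ≤ g t := by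
    intro t
    rw [hgval]
    by_cases h : 0 < (t:ℝ) ∧ (t:ℝ) < 1
    · rw [hGdef]; simp only [if_pos h]; exact hfpos _
    · rw [hGdef]; simp only [if_neg h]; exact le_refl 0
  -- Bernstein approximation
  obtain ⟨n, hn2, hB⟩ : ∃ n : ℕ, 2 ≤ n ∧ ‖bernsteinApproximation n g - g‖ < ε/2 := by
    have h := bernsteinApproximation_uniform g
    rw [Metric.tendsto_atTop] at h
    obtain ⟨n₀, hn₀⟩ := h (ε/2) (by linarith)
    refine ⟨max n₀ 2, le_max_right _ _, ?_⟩
    have := hn₀ (max n₀ 2) (le_max_left _ _)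
    rwa [dist_eq_norm] at this
  have hn0 : (n:ℝ) ≠ 0 := by positivity
  -- choice of denominator Q
  obtain ⟨Q, hQ⟩ := exists_nat_ge (2*((n:ℝ)+1)/ε)
  have hQpos : (0:ℝ) < Q := lt_of_lt_of_le (by positivity) hQ
  have hQ' : 2*((n:ℝ)+1) ≤ ε * Q := by
    rw [div_le_iff₀ hε] at hQ; linarith
  -- coefficients
  set t : Fin (n+1) → ℝ := fun k => g (bernstein.z k) * (n.choose k) with htdef
  have htnn : ∀ k, 0 ≤ t k := fun k => mul_nonneg (hgnn _) (Nat.cast_nonneg _)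
  set c : Fin (n+1) → ℕ :=
    fun k => if 1 ≤ (k:ℕ) ∧ (k:ℕ) ≤ n-1 then ⌊t k * Q⌋₊ + 1 else 0 with hcdef
  set d : Fin (n+1) → ℕ := fun j => Q * n.choose j with hddef
  have hQn : 0 < Q := by exact_mod_cast hQpos
  have hdpos : ∀ j : Fin (n+1), 0 < d j :=
    fun j => Nat.mul_pos hQn (Nat.choose_pos (Nat.lt_succ_iff.mp j.isLt))
  obtain ⟨N, a, haval, haex, hasum⟩ := repeat_family' c (fun k : Fin (n+1) => (4:ℝ)^(k:ℕ))
  obtain ⟨M, b, hbval, hbex, hbsum⟩ := repeat_family' d (fun j : Fin (n+1) => (4:ℝ)^(j:ℕ))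
  -- basic index facts
  have hkfact : ∀ k : Fin (n+1), 0 < c k → 1 ≤ (k:ℕ) ∧ (k:ℕ) ≤ n-1 := by
    intro k hk
    by_contra h
    rw [hcdef] at hk
    simp only [if_neg h] at hk
    exact lt_irrefl 0 hk
  refine ⟨N, M, a, b, ?_, ?_, ?_, ?_, ?_, ?_, ?_⟩
  · -- 0 < N
    obtain ⟨i, _⟩ := haex ⟨1, by omega⟩ (by
      rw [hcdef]
      have : 1 ≤ ((⟨1, by omega⟩ : Fin (n+1)):ℕ) ∧ ((⟨1, by omega⟩ : Fin (n+1)):ℕ) ≤ n-1 := by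
        simp; omega
      simp only [if_pos this]; omega)
    exact Fin.pos_iff_nonempty.mpr ⟨i⟩
  · obtain ⟨j, _⟩ := hbex ⟨0, by omega⟩ (hdpos _)
    exact Fin.pos_iff_nonempty.mpr ⟨j⟩
  · intro i
    obtain ⟨k, _, hk⟩ := haval i
    rw [hk]; positivity
  · intro j
    obtain ⟨k, _, hk⟩ := hbval j
    rw [hk]; positivity
  · -- max b > all a
    obtain ⟨j, hj⟩ := hbex ⟨n, by omega⟩ (hdpos _)
    refine ⟨j, fun i => ?_⟩
    obtain ⟨k, hck, hk⟩ := haval i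
    rw [hk, hj]
    have hkn : (k:ℕ) < n := by have := hkfact k hck; omega
    exact pow_lt_pow_right₀ (by norm_num) hkn
  · -- min b < all a
    obtain ⟨j, hj⟩ := hbex ⟨0, by omega⟩ (hdpos _)
    refine ⟨j, fun i => ?_⟩
    obtain ⟨k, hck, hk⟩ := haval i
    rw [hk, hj]
    have hk1 : (k:ℕ) ≠ 0 := by have := hkfact k hck; omega
    simpa using one_lt_pow₀ (by norm_num : (1:ℝ) < 4) hk1
  · -- the estimate
    intro β
    set w : ℝ := (4:ℝ) ^ β with hwdef
    have hw : 0 < w := Real.rpow_pos_of_pos (by norm_num) β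
    have hw1 : (0:ℝ) < w + 1 := by linarith
    set v : ℝ := w/(w+1) with hvdef
    have hv0 : 0 < v := div_pos hw hw1
    have hv1 : v < 1 := (div_lt_one hw1).mpr (by linarith)
    have hvI : v ∈ I := ⟨le_of_lt hv0, le_of_lt hv1⟩
    have h1v : 1 - v = 1/(w+1) := by
      rw [hvdef]; field_simp; ring
    -- the sums
    have hA : ∑ i, a i ^ β = ∑ k : Fin (n+1), (c k : ℝ) * w^(k:ℕ) := by
      rw [hasum β]
      exact Finset.sum_congr rfl fun k _ => by rw [pow_rpow_helper]
    have hBsum : ∑ j, b j ^ β = (Q : ℝ) * (w+1)^n := by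
      rw [hbsum β]
      have hap : (w+1)^n = ∑ k ∈ Finset.range (n+1), w^k * (n.choose k : ℝ) := by
        rw [add_pow]
        exact Finset.sum_congr rfl fun k _ => by rw [one_pow, mul_one]
      rw [hap, Finset.mul_sum,
        ← Fin.sum_univ_eq_sum_range (fun k => (Q:ℝ) * (w^k * (n.choose k : ℝ)))]
      refine Finset.sum_congr rfl fun j _ => ?_
      rw [hddef, pow_rpow_helper]
      push_cast
      ring
    have hBpos : (0:ℝ) < (Q:ℝ) * (w+1)^n := by positivity
    have hterm : ∀ k : Fin (n+1), w^(k:ℕ)/((Q:ℝ) * (w+1)^n)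
        = ((1:ℝ)/Q) * (v^(k:ℕ) * (1-v)^(n-(k:ℕ))) := by
      intro k
      have hkn : (k:ℕ) ≤ n := Nat.lt_succ_iff.mp k.isLt
      rw [h1v, hvdef, div_pow, div_pow, one_pow]
      rw [div_mul_div_comm, mul_one, ← pow_add]
      have : (k:ℕ) + (n - (k:ℕ)) = n := by omega
      rw [this]
      field_simp
    have hratio : (∑ i, a i ^ β) / (∑ j, b j ^ β)
        = ∑ k : Fin (n+1), ((c k : ℝ)/Q) * (v^(k:ℕ) * (1-v)^(n-(k:ℕ))) := by
      rw [hA, hBsum, Finset.sum_div]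
      refine Finset.sum_congr rfl fun k _ => ?_
      rw [mul_div_assoc, hterm k]
      ring
    -- f β = g ⟨v, hvI⟩
    have hfb : f β = g ⟨v, hvI⟩ := by
      rw [hgval]
      show f β = G v
      have hvw : v/(1-v) = w := by
        rw [h1v, hvdef]
        field_simp
      rw [hGdef]
      simp only
      rw [hvw, hwdef, Real.logb_rpow (by norm_num : (0:ℝ) < 4) (by norm_num : (4:ℝ) ≠ 1),
        if_pos (show 0 < v ∧ v < 1 from ⟨hv0, hv1⟩)]
    -- Bernstein value
    have hBval : (bernsteinApproximation n g) ⟨v, hvI⟩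
        = ∑ k : Fin (n+1), t k * (v^(k:ℕ) * (1-v)^(n-(k:ℕ))) := by
      rw [bernsteinApproximation.apply]
      refine Finset.sum_congr rfl fun k _ => ?_
      rw [bernstein_apply, htdef]
      simp only []
      ring
    -- pointwise Bernstein error
    have herr1 : |f β - (bernsteinApproximation n g) ⟨v, hvI⟩| ≤ ε/2 := by
      rw [hfb]
      have := ContinuousMap.norm_coe_le_norm (bernsteinApproximation n g - g) ⟨v, hvI⟩
      rw [abs_sub_comm]
      calc |(bernsteinApproximation n g) ⟨v, hvI⟩ - g ⟨v, hvI⟩|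
          = ‖(bernsteinApproximation n g - g) ⟨v, hvI⟩‖ := by
            rw [ContinuousMap.sub_apply]; rfl
        _ ≤ ‖bernsteinApproximation n g - g‖ := this
        _ ≤ ε/2 := le_of_lt hB
    -- coefficient error
    have hcoef : ∀ k : Fin (n+1), |t k - (c k : ℝ)/Q| ≤ 1/Q := by
      intro k
      by_cases h : 1 ≤ (k:ℕ) ∧ (k:ℕ) ≤ n-1
      · have hck : (c k : ℝ) = (⌊t k * Q⌋₊ : ℝ) + 1 := by
          rw [hcdef]; simp only [if_pos h]; push_cast; ring
        have hfl : (⌊t k * Q⌋₊ : ℝ) ≤ t k * Q :=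
          Nat.floor_le (mul_nonneg (htnn k) (le_of_lt hQpos))
        have hfl2 : t k * Q < (⌊t k * Q⌋₊ : ℝ) + 1 := Nat.lt_floor_add_one _
        rw [abs_le]
        constructor
        · rw [neg_le, neg_sub]
          rw [div_sub' (ne_of_gt hQpos), div_le_div_iff₀ hQpos hQpos]
          nlinarith
        · rw [sub_le_iff_le_add]
          have : t k ≤ (c k:ℝ)/Q := by
            rw [le_div_iff₀ hQpos, hck]
            linarith
          linarith [one_div_nonneg.mpr (le_of_lt hQpos)]
      · have hck : (c k : ℝ) = 0 := by rw [hcdef]; simp [if_neg h]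
        have htk : t k = 0 := by
          rw [htdef]
          have hkn : (k:ℕ) ≤ n := Nat.lt_succ_iff.mp k.isLt
          have : (k:ℕ) = 0 ∨ (k:ℕ) = n := by omega
          rcases this with h0 | hn
          · have hzv0 : ((bernstein.z k : I) : ℝ) = 0 := by
              show ((k:ℕ):ℝ)/(n:ℝ) = 0
              rw [h0]; simp
            have hz : g (bernstein.z k) = 0 := by
              rw [hgval, hzv0, hGdef]; norm_num
            simp [hz]
          · have hzv1 : ((bernstein.z k : I) : ℝ) = 1 := by
              show ((k:ℕ):ℝ)/(n:ℝ) = 1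
              rw [hn, div_self hn0]
            have hz : g (bernstein.z k) = 0 := by
              rw [hgval, hzv1, hGdef]; norm_num
            simp [hz]
        rw [hck, htk]
        simp
    -- the second error
    have hvpow : ∀ k : Fin (n+1), 0 ≤ v^(k:ℕ) * (1-v)^(n-(k:ℕ)) ∧ v^(k:ℕ) * (1-v)^(n-(k:ℕ)) ≤ 1 := by
      intro k
      have h0 : (0:ℝ) ≤ v := le_of_lt hv0
      have h1 : (0:ℝ) ≤ 1 - v := by linarith
      constructor
      · positivity
      · calc v^(k:ℕ) * (1-v)^(n-(k:ℕ)) ≤ 1 * 1 := by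
              apply mul_le_mul (pow_le_one₀ h0 (le_of_lt hv1)) (pow_le_one₀ h1 (by linarith)) (by positivity) zero_le_one
          _ = 1 := by norm_num
    have herr2 : |(bernsteinApproximation n g) ⟨v, hvI⟩
        - (∑ i, a i ^ β) / (∑ j, b j ^ β)| ≤ ε/2 := by
      rw [hBval, hratio, ← Finset.sum_sub_distrib]
      calc |∑ k : Fin (n+1), (t k * (v^(k:ℕ) * (1-v)^(n-(k:ℕ)))
              - ((c k : ℝ)/Q) * (v^(k:ℕ) * (1-v)^(n-(k:ℕ))))|
          ≤ ∑ k : Fin (n+1), |t k * (v^(k:ℕ) * (1-v)^(n-(k:ℕ)))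
              - ((c k : ℝ)/Q) * (v^(k:ℕ) * (1-v)^(n-(k:ℕ)))| := Finset.abs_sum_le_sum_abs _ _
        _ ≤ ∑ _k : Fin (n+1), 1/(Q:ℝ) := by
            refine Finset.sum_le_sum fun k _ => ?_
            rw [← sub_mul, abs_mul]
            have h1 := hcoef k
            have h2 := hvpow k
            calc |t k - (c k : ℝ)/Q| * |v^(k:ℕ) * (1-v)^(n-(k:ℕ))|
                ≤ (1/Q) * 1 := by
                  apply mul_le_mul h1 _ (abs_nonneg _) (by positivity)
                  rw [abs_of_nonneg h2.1]; exact h2.2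
              _ = 1/Q := by norm_num
        _ = ((n:ℝ)+1)/Q := by
            rw [Finset.sum_const]
            simp [Finset.card_univ]
            field_simp
        _ ≤ ε/2 := by
            rw [div_le_div_iff₀ hQpos (by norm_num : (0:ℝ) < 2)]
            linarith
    calc |f β - (∑ i, a i ^ β) / (∑ j, b j ^ β)|
        ≤ |f β - (bernsteinApproximation n g) ⟨v, hvI⟩|
          + |(bernsteinApproximation n g) ⟨v, hvI⟩ - (∑ i, a i ^ β) / (∑ j, b j ^ β)| := by
          exact abs_sub_le _ _ _
      _ ≤ ε/2 + ε/2 := add_le_add herr1 herr2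
      _ = ε := by ring
end

section
/- Let F₂ be the free group freely generated by a and b. Then the elements g₁ = a⁴, g₂ = b⁴, k₁ = ab, and k₂ = ba freely generate a free subgroup of F₂ of rank 4. -/
set_option maxHeartbeats 2000000

/-! Ping-pong proof setup: the Sanov representation `a ↦ [[1,2],[0,1]]`, `b ↦ [[1,0],[2,1]]` of the
free group on two generators, acting on the punctured integer plane.  The images of
`a⁴, b⁴, ab, ba` play ping-pong with explicit slope-interval cones. -/

private abbrev V : Type := {v : ℤ × ℤ // v ≠ 0}

private def pa : Equiv.Perm V where
  toFun v := ⟨(v.1.1 + 2*v.1.2, v.1.2), fun h => v.2 (by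
    obtain ⟨h1, h2⟩ := Prod.mk_eq_zero.mp h
    have hv : v.1 = ((v.1.1 : ℤ), (v.1.2 : ℤ)) := rfl
    rw [hv]; exact Prod.mk_eq_zero.mpr ⟨by linarith, h2⟩)⟩
  invFun v := ⟨(v.1.1 - 2*v.1.2, v.1.2), fun h => v.2 (by
    obtain ⟨h1, h2⟩ := Prod.mk_eq_zero.mp h
    have hv : v.1 = ((v.1.1 : ℤ), (v.1.2 : ℤ)) := rfl
    rw [hv]; exact Prod.mk_eq_zero.mpr ⟨by linarith, h2⟩)⟩
  left_inv v := by apply Subtype.ext; simp [Prod.ext_iff]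
  right_inv v := by apply Subtype.ext; simp [Prod.ext_iff]

private def pb : Equiv.Perm V where
  toFun v := ⟨(v.1.1, 2*v.1.1 + v.1.2), fun h => v.2 (by
    obtain ⟨h1, h2⟩ := Prod.mk_eq_zero.mp h
    have hv : v.1 = ((v.1.1 : ℤ), (v.1.2 : ℤ)) := rfl
    rw [hv]; exact Prod.mk_eq_zero.mpr ⟨h1, by linarith⟩)⟩
  invFun v := ⟨(v.1.1, v.1.2 - 2*v.1.1), fun h => v.2 (by
    obtain ⟨h1, h2⟩ := Prod.mk_eq_zero.mp h
    have hv : v.1 = ((v.1.1 : ℤ), (v.1.2 : ℤ)) := rfl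
    rw [hv]; exact Prod.mk_eq_zero.mpr ⟨h1, by linarith⟩)⟩
  left_inv v := by apply Subtype.ext; simp [Prod.ext_iff]
  right_inv v := by apply Subtype.ext; simp [Prod.ext_iff]

/-- The four ping-pong players: the images of `a⁴, b⁴, ab, ba`. -/
private def g : Fin 4 → Equiv.Perm V := ![pa^4, pb^4, pa*pb, pb*pa]

private lemma g0_smul (v : V) : ((pa^4) • v).1 = (v.1.1 + 8*v.1.2, v.1.2) := by
  show ((pa^4 : Equiv.Perm V) v).1 = _
  simp only [pow_succ, pow_zero, one_mul, Equiv.Perm.mul_apply]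
  simp only [pa, Equiv.coe_fn_mk, Prod.ext_iff]
  exact ⟨by ring, trivial⟩

private lemma g1_smul (v : V) : ((pb^4) • v).1 = (v.1.1, 8*v.1.1 + v.1.2) := by
  show ((pb^4 : Equiv.Perm V) v).1 = _
  simp only [pow_succ, pow_zero, one_mul, Equiv.Perm.mul_apply]
  simp only [pb, Equiv.coe_fn_mk, Prod.ext_iff]
  exact ⟨trivial, by ring⟩

private lemma g2_smul (v : V) : ((pa*pb) • v).1 = (5*v.1.1 + 2*v.1.2, 2*v.1.1 + v.1.2) := by
  show ((pa*pb : Equiv.Perm V) v).1 = _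
  simp only [Equiv.Perm.mul_apply]
  simp only [pa, pb, Equiv.coe_fn_mk, Prod.ext_iff]
  exact ⟨by ring, trivial⟩

private lemma g3_smul (v : V) : ((pb*pa) • v).1 = (v.1.1 + 2*v.1.2, 2*v.1.1 + 5*v.1.2) := by
  show ((pb*pa : Equiv.Perm V) v).1 = _
  simp only [Equiv.Perm.mul_apply]
  simp only [pa, pb, Equiv.coe_fn_mk, Prod.ext_iff]
  exact ⟨trivial, by ring⟩

private lemma g0_inv_smul (v : V) : ((pa^4)⁻¹ • v).1 = (v.1.1 - 8*v.1.2, v.1.2) := by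
  have h := g0_smul ((pa^4)⁻¹ • v)
  rw [smul_inv_smul, Prod.ext_iff] at h
  obtain ⟨h1, h2⟩ := h
  dsimp only at h1 h2
  rw [Prod.ext_iff]; dsimp only
  omega

private lemma g1_inv_smul (v : V) : ((pb^4)⁻¹ • v).1 = (v.1.1, v.1.2 - 8*v.1.1) := by
  have h := g1_smul ((pb^4)⁻¹ • v)
  rw [smul_inv_smul, Prod.ext_iff] at h
  obtain ⟨h1, h2⟩ := h
  dsimp only at h1 h2
  rw [Prod.ext_iff]; dsimp only
  omega

private lemma g2_inv_smul (v : V) :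
    ((pa*pb)⁻¹ • v).1 = (v.1.1 - 2*v.1.2, -2*v.1.1 + 5*v.1.2) := by
  have h := g2_smul ((pa*pb)⁻¹ • v)
  rw [smul_inv_smul, Prod.ext_iff] at h
  obtain ⟨h1, h2⟩ := h
  dsimp only at h1 h2
  rw [Prod.ext_iff]; dsimp only
  omega

private lemma g3_inv_smul (v : V) :
    ((pb*pa)⁻¹ • v).1 = (5*v.1.1 - 2*v.1.2, -2*v.1.1 + v.1.2) := by
  have h := g3_smul ((pb*pa)⁻¹ • v)
  rw [smul_inv_smul, Prod.ext_iff] at h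
  obtain ⟨h1, h2⟩ := h
  dsimp only at h1 h2
  rw [Prod.ext_iff]; dsimp only
  omega

/-- Attracting cones: slopes in `[0,1/4)`, `[3,∞]`, `(1/4,9/10)`, `(9/10,29/10)` respectively. -/
private def X : Fin 4 → Set V :=
  ![{v | (0 < v.1.1 ∧ 0 ≤ v.1.2 ∧ 4*v.1.2 < v.1.1) ∨ (v.1.1 < 0 ∧ v.1.2 ≤ 0 ∧ v.1.1 < 4*v.1.2)},
    {v | (0 < v.1.1 ∧ 3*v.1.1 ≤ v.1.2) ∨ (v.1.1 < 0 ∧ v.1.2 ≤ 3*v.1.1) ∨ v.1.1 = 0},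
    {v | (0 < v.1.1 ∧ v.1.1 < 4*v.1.2 ∧ 10*v.1.2 < 9*v.1.1) ∨
      (v.1.1 < 0 ∧ 4*v.1.2 < v.1.1 ∧ 9*v.1.1 < 10*v.1.2)},
    {v | (0 < v.1.1 ∧ 9*v.1.1 < 10*v.1.2 ∧ 10*v.1.2 < 29*v.1.1) ∨
      (v.1.1 < 0 ∧ 10*v.1.2 < 9*v.1.1 ∧ 29*v.1.1 < 10*v.1.2)}]

/-- Repelling cones: slopes in `(-1/3,0)`, `(-∞,-5)`, `(-5,-7/5)`, `(-7/5,-1/3)` respectively. -/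
private def Y : Fin 4 → Set V :=
  ![{v | (0 < v.1.1 ∧ -v.1.1 < 3*v.1.2 ∧ v.1.2 < 0) ∨ (v.1.1 < 0 ∧ 3*v.1.2 < -v.1.1 ∧ 0 < v.1.2)},
    {v | (0 < v.1.1 ∧ v.1.2 < -5*v.1.1) ∨ (v.1.1 < 0 ∧ -5*v.1.1 < v.1.2)},
    {v | (0 < v.1.1 ∧ -5*v.1.1 < v.1.2 ∧ 5*v.1.2 < -7*v.1.1) ∨
      (v.1.1 < 0 ∧ v.1.2 < -5*v.1.1 ∧ -7*v.1.1 < 5*v.1.2)},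
    {v | (0 < v.1.1 ∧ -7*v.1.1 < 5*v.1.2 ∧ 3*v.1.2 < -v.1.1) ∨
      (v.1.1 < 0 ∧ 5*v.1.2 < -7*v.1.1 ∧ -v.1.1 < 3*v.1.2)}]

private lemma ne_zero_coords (v : V) : ¬(v.1.1 = 0 ∧ v.1.2 = 0) := by
  intro ⟨h1, h2⟩
  exact v.2 (by rw [show v.1 = ((v.1.1 : ℤ), (v.1.2 : ℤ)) from rfl, h1, h2]; rfl)

/-- Case analysis on `Fin 4` producing literal indices. -/
private lemma fin4 {P : Fin 4 → Prop} (h0 : P 0) (h1 : P 1) (h2 : P 2) (h3 : P 3) :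
    ∀ i, P i := by
  intro i
  fin_cases i
  exacts [h0, h1, h2, h3]

private lemma key : Function.Injective (FreeGroup.lift g) := by
  have hXd : ∀ i j : Fin 4, i ≠ j → Disjoint (X i) (X j) := by
    refine fin4 ?_ ?_ ?_ ?_ <;> refine fin4 ?_ ?_ ?_ ?_ <;> intro hij <;>
      first
      | exact absurd rfl hij
      | · rw [Set.disjoint_left]
          intro v h1 h2
          have h0 := ne_zero_coords v
          simp only [X, Matrix.cons_val_zero, Matrix.cons_val_one, Matrix.head_cons,
            Matrix.cons_val_two, Matrix.tail_cons, Matrix.cons_val_three,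
            Set.mem_setOf_eq] at h1 h2
          omega
  have hYd : ∀ i j : Fin 4, i ≠ j → Disjoint (Y i) (Y j) := by
    refine fin4 ?_ ?_ ?_ ?_ <;> refine fin4 ?_ ?_ ?_ ?_ <;> intro hij <;>
      first
      | exact absurd rfl hij
      | · rw [Set.disjoint_left]
          intro v h1 h2
          have h0 := ne_zero_coords v
          simp only [Y, Matrix.cons_val_zero, Matrix.cons_val_one, Matrix.head_cons,
            Matrix.cons_val_two, Matrix.tail_cons, Matrix.cons_val_three,
            Set.mem_setOf_eq] at h1 h2
          omega
  apply FreeGroup.injective_lift_of_ping_pong g X Y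
  · -- nonempty
    refine fin4 ?_ ?_ ?_ ?_
    · exact ⟨⟨(1, 0), by decide⟩, by norm_num [X, Matrix.cons_val_zero]⟩
    · exact ⟨⟨(1, 3), by decide⟩, by norm_num [X, Matrix.cons_val_one, Matrix.head_cons]⟩
    · exact ⟨⟨(2, 1), by decide⟩, by norm_num [X, Matrix.cons_val_two, Matrix.tail_cons,
        Matrix.head_cons]⟩
    · exact ⟨⟨(1, 2), by decide⟩, by norm_num [X, Matrix.cons_val_three, Matrix.tail_cons,
        Matrix.head_cons]⟩
  · exact fun i j hij => hXd i j hij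
  · exact fun i j hij => hYd i j hij
  · -- X vs Y disjoint
    refine fin4 ?_ ?_ ?_ ?_ <;> refine fin4 ?_ ?_ ?_ ?_ <;>
      · rw [Set.disjoint_left]
        intro v h1 h2
        have h0 := ne_zero_coords v
        simp only [X, Y, Matrix.cons_val_zero, Matrix.cons_val_one, Matrix.head_cons,
          Matrix.cons_val_two, Matrix.tail_cons, Matrix.cons_val_three,
          Set.mem_setOf_eq] at h1 h2
        omega
  · -- hX : g i • (Y i)ᶜ ⊆ X i
    refine fin4 ?_ ?_ ?_ ?_
    · intro w hw
      obtain ⟨v, hv, rfl⟩ := Set.mem_smul_set.mp hw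
      have h0 := ne_zero_coords v
      simp only [Y, Matrix.cons_val_zero, Matrix.cons_val_one, Matrix.head_cons, Matrix.cons_val_two, Matrix.tail_cons, Matrix.cons_val_three, Set.mem_compl_iff, Set.mem_setOf_eq] at hv
      simp only [g, X, Matrix.cons_val_zero, Matrix.cons_val_one, Matrix.head_cons, Matrix.cons_val_two, Matrix.tail_cons, Matrix.cons_val_three, Set.mem_setOf_eq]
      rw [g0_smul v]
      dsimp only
      omega
    · intro w hw
      obtain ⟨v, hv, rfl⟩ := Set.mem_smul_set.mp hw
      have h0 := ne_zero_coords v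
      simp only [Y, Matrix.cons_val_zero, Matrix.cons_val_one, Matrix.head_cons, Matrix.cons_val_two, Matrix.tail_cons, Matrix.cons_val_three, Set.mem_compl_iff, Set.mem_setOf_eq] at hv
      simp only [g, X, Matrix.cons_val_zero, Matrix.cons_val_one, Matrix.head_cons, Matrix.cons_val_two, Matrix.tail_cons, Matrix.cons_val_three, Set.mem_setOf_eq]
      rw [g1_smul v]
      dsimp only
      omega
    · intro w hw
      obtain ⟨v, hv, rfl⟩ := Set.mem_smul_set.mp hw
      have h0 := ne_zero_coords v
      simp only [Y, Matrix.cons_val_zero, Matrix.cons_val_one, Matrix.head_cons, Matrix.cons_val_two, Matrix.tail_cons, Matrix.cons_val_three, Set.mem_compl_iff, Set.mem_setOf_eq] at hv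
      simp only [g, X, Matrix.cons_val_zero, Matrix.cons_val_one, Matrix.head_cons, Matrix.cons_val_two, Matrix.tail_cons, Matrix.cons_val_three, Set.mem_setOf_eq]
      rw [g2_smul v]
      dsimp only
      omega
    · intro w hw
      obtain ⟨v, hv, rfl⟩ := Set.mem_smul_set.mp hw
      have h0 := ne_zero_coords v
      simp only [Y, Matrix.cons_val_zero, Matrix.cons_val_one, Matrix.head_cons, Matrix.cons_val_two, Matrix.tail_cons, Matrix.cons_val_three, Set.mem_compl_iff, Set.mem_setOf_eq] at hv
      simp only [g, X, Matrix.cons_val_zero, Matrix.cons_val_one, Matrix.head_cons, Matrix.cons_val_two, Matrix.tail_cons, Matrix.cons_val_three, Set.mem_setOf_eq]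
      rw [g3_smul v]
      dsimp only
      omega
  · -- hY : (g i)⁻¹ • (X i)ᶜ ⊆ Y i
    refine fin4 ?_ ?_ ?_ ?_
    · intro w hw
      rw [Pi.inv_apply] at hw
      obtain ⟨v, hv, rfl⟩ := Set.mem_smul_set.mp hw
      have h0 := ne_zero_coords v
      simp only [X, Matrix.cons_val_zero, Matrix.cons_val_one, Matrix.head_cons, Matrix.cons_val_two, Matrix.tail_cons, Matrix.cons_val_three, Set.mem_compl_iff, Set.mem_setOf_eq] at hv
      simp only [g, Y, Matrix.cons_val_zero, Matrix.cons_val_one, Matrix.head_cons, Matrix.cons_val_two, Matrix.tail_cons, Matrix.cons_val_three, Set.mem_setOf_eq]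
      rw [g0_inv_smul v]
      dsimp only
      omega
    · intro w hw
      rw [Pi.inv_apply] at hw
      obtain ⟨v, hv, rfl⟩ := Set.mem_smul_set.mp hw
      have h0 := ne_zero_coords v
      simp only [X, Matrix.cons_val_zero, Matrix.cons_val_one, Matrix.head_cons, Matrix.cons_val_two, Matrix.tail_cons, Matrix.cons_val_three, Set.mem_compl_iff, Set.mem_setOf_eq] at hv
      simp only [g, Y, Matrix.cons_val_zero, Matrix.cons_val_one, Matrix.head_cons, Matrix.cons_val_two, Matrix.tail_cons, Matrix.cons_val_three, Set.mem_setOf_eq]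
      rw [g1_inv_smul v]
      dsimp only
      omega
    · intro w hw
      rw [Pi.inv_apply] at hw
      obtain ⟨v, hv, rfl⟩ := Set.mem_smul_set.mp hw
      have h0 := ne_zero_coords v
      simp only [X, Matrix.cons_val_zero, Matrix.cons_val_one, Matrix.head_cons, Matrix.cons_val_two, Matrix.tail_cons, Matrix.cons_val_three, Set.mem_compl_iff, Set.mem_setOf_eq] at hv
      simp only [g, Y, Matrix.cons_val_zero, Matrix.cons_val_one, Matrix.head_cons, Matrix.cons_val_two, Matrix.tail_cons, Matrix.cons_val_three, Set.mem_setOf_eq]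
      rw [g2_inv_smul v]
      dsimp only
      omega
    · intro w hw
      rw [Pi.inv_apply] at hw
      obtain ⟨v, hv, rfl⟩ := Set.mem_smul_set.mp hw
      have h0 := ne_zero_coords v
      simp only [X, Matrix.cons_val_zero, Matrix.cons_val_one, Matrix.head_cons, Matrix.cons_val_two, Matrix.tail_cons, Matrix.cons_val_three, Set.mem_compl_iff, Set.mem_setOf_eq] at hv
      simp only [g, Y, Matrix.cons_val_zero, Matrix.cons_val_one, Matrix.head_cons, Matrix.cons_val_two, Matrix.tail_cons, Matrix.cons_val_three, Set.mem_setOf_eq]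
      rw [g3_inv_smul v]
      dsimp only
      omega

/-- In the free group on two generators `a, b`, the elements
`a⁴, b⁴, ab, ba` freely generate a free subgroup of rank 4. -/
theorem free_four_elements :
    Function.Injective
      (FreeGroup.lift (fun i : Fin 4 =>
        ![(FreeGroup.of (0 : Fin 2)) ^ 4,
          (FreeGroup.of (1 : Fin 2)) ^ 4,
          FreeGroup.of (0 : Fin 2) * FreeGroup.of (1 : Fin 2),
          FreeGroup.of (1 : Fin 2) * FreeGroup.of (0 : Fin 2)] i)) := by
  have hcomp : (FreeGroup.lift ![pa, pb]).comp
      (FreeGroup.lift (fun i : Fin 4 =>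
        ![(FreeGroup.of (0 : Fin 2)) ^ 4,
          (FreeGroup.of (1 : Fin 2)) ^ 4,
          FreeGroup.of (0 : Fin 2) * FreeGroup.of (1 : Fin 2),
          FreeGroup.of (1 : Fin 2) * FreeGroup.of (0 : Fin 2)] i)) = FreeGroup.lift g := by
    apply FreeGroup.ext_hom
    refine fin4 ?_ ?_ ?_ ?_ <;>
      simp [g, map_pow, map_mul]
  intro u w h
  apply key
  rw [← hcomp]
  simp only [MonoidHom.comp_apply, h]
end

section
/- Let p be an odd prime and Z = SL(2, ℤ_p), the special linear group over the p-adic integers with its profinite topology. Let g₁ = [[1,8],[0,1]] and g₂ = [[1,0],[8,1]] (namely a⁴ and b⁴ for a = [[1,2],[0,1]], b = [[1,0],[2,1]]). Then the subgroup generated by g₁ and g₂ is dense in Z. -/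
open Matrix

/-- The subspace topology on `SL(n, R)` induced from the space of matrices. -/
instance specialLinearGroupTopology {n R : Type*} [DecidableEq n] [Fintype n]
    [CommRing R] [TopologicalSpace R] :
    TopologicalSpace (Matrix.SpecialLinearGroup n R) :=
  TopologicalSpace.induced (fun g => (g : Matrix n n R)) inferInstance

section aux
variable {n R : Type*} [DecidableEq n] [Fintype n] [CommRing R] [TopologicalSpace R]
  [IsTopologicalRing R]

omit [IsTopologicalRing R] in
lemma SL_coe_continuous :
    Continuous (fun g : Matrix.SpecialLinearGroup n R => (g : Matrix n n R)) :=
  continuous_induced_dom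

instance : IsTopologicalGroup (Matrix.SpecialLinearGroup n R) where
  continuous_mul := by
    apply continuous_induced_rng.2
    show Continuous fun p : _ × _ => ((p.1 * p.2 : Matrix.SpecialLinearGroup n R) : Matrix n n R)
    simp only [Matrix.SpecialLinearGroup.coe_mul]
    exact (SL_coe_continuous.comp continuous_fst).matrix_mul
      (SL_coe_continuous.comp continuous_snd)
  continuous_inv := by
    apply continuous_induced_rng.2
    show Continuous fun g : Matrix.SpecialLinearGroup n R => ((g⁻¹ : _) : Matrix n n R)
    simp only [Matrix.SpecialLinearGroup.coe_inv]
    exact SL_coe_continuous.matrix_adjugate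

end aux

namespace DenseSL2Aux

variable {p : ℕ} [Fact p.Prime]

/-- upper unipotent -/
noncomputable def U (t : ℤ_[p]) : Matrix.SpecialLinearGroup (Fin 2) ℤ_[p] :=
  ⟨!![1, t; 0, 1], by simp [Matrix.det_fin_two_of]⟩

/-- lower unipotent -/
noncomputable def Lo (t : ℤ_[p]) : Matrix.SpecialLinearGroup (Fin 2) ℤ_[p] :=
  ⟨!![1, 0; t, 1], by simp [Matrix.det_fin_two_of]⟩

lemma U_coe (t : ℤ_[p]) : (U t : Matrix (Fin 2) (Fin 2) ℤ_[p]) = !![1, t; 0, 1] := rfl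
lemma Lo_coe (t : ℤ_[p]) : (Lo t : Matrix (Fin 2) (Fin 2) ℤ_[p]) = !![1, 0; t, 1] := rfl

lemma U_add (s t : ℤ_[p]) : U s * U t = U (s + t) := by
  apply Subtype.ext
  show (U s : Matrix (Fin 2) (Fin 2) ℤ_[p]) * U t = U (s + t)
  simp [U, Matrix.SpecialLinearGroup.coe_mul, Matrix.mul_fin_two, add_comm]

lemma Lo_add (s t : ℤ_[p]) : Lo s * Lo t = Lo (s + t) := by
  apply Subtype.ext
  show (Lo s : Matrix (Fin 2) (Fin 2) ℤ_[p]) * Lo t = Lo (s + t)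
  simp [Lo, Matrix.SpecialLinearGroup.coe_mul, Matrix.mul_fin_two, add_comm]

lemma U_zero : U (0 : ℤ_[p]) = 1 := by
  apply Subtype.ext
  simp [U, Matrix.SpecialLinearGroup.coe_one, Matrix.one_fin_two]

lemma Lo_zero : Lo (0 : ℤ_[p]) = 1 := by
  apply Subtype.ext
  simp [Lo, Matrix.SpecialLinearGroup.coe_one, Matrix.one_fin_two]

/-- `U` as a monoid hom from `Multiplicative ℤ_[p]`. -/
noncomputable def Uhom : Multiplicative ℤ_[p] →* Matrix.SpecialLinearGroup (Fin 2) ℤ_[p] where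
  toFun t := U t.toAdd
  map_one' := U_zero
  map_mul' s t := (U_add _ _).symm

noncomputable def Lohom : Multiplicative ℤ_[p] →* Matrix.SpecialLinearGroup (Fin 2) ℤ_[p] where
  toFun t := Lo t.toAdd
  map_one' := Lo_zero
  map_mul' s t := (Lo_add _ _).symm

lemma U_zpow (t : ℤ_[p]) (n : ℤ) : U t ^ n = U ((n : ℤ_[p]) * t) := by
  have h := map_zpow Uhom (Multiplicative.ofAdd t) n
  simpa [Uhom, ← zsmul_eq_mul] using h.symm

lemma Lo_zpow (t : ℤ_[p]) (n : ℤ) : Lo t ^ n = Lo ((n : ℤ_[p]) * t) := by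
  have h := map_zpow Lohom (Multiplicative.ofAdd t) n
  simpa [Lohom, ← zsmul_eq_mul] using h.symm

lemma continuous_U : Continuous (U : ℤ_[p] → _) := by
  apply continuous_induced_rng.2
  apply continuous_matrix
  intro i j
  fin_cases i <;> fin_cases j <;>
    simp [U_coe] <;> fun_prop

lemma continuous_Lo : Continuous (Lo : ℤ_[p] → _) := by
  apply continuous_induced_rng.2
  apply continuous_matrix
  intro i j
  fin_cases i <;> fin_cases j <;>
    simp [Lo_coe] <;> fun_prop

lemma isUnit_eight (hp : p ≠ 2) : IsUnit (8 : ℤ_[p]) := by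
  by_contra h
  rw [PadicInt.not_isUnit_iff] at h
  have h8 : (8 : ℤ_[p]) = ((8 : ℤ) : ℤ_[p]) := by norm_cast
  rw [h8, PadicInt.norm_int_lt_one_iff_dvd] at h
  have hn : p ∣ 8 := by exact_mod_cast h
  have h2 : p ∣ 2 := (Fact.out : p.Prime).dvd_of_dvd_pow (show p ∣ 2 ^ 3 by norm_num at hn ⊢; exact hn)
  exact hp ((Nat.prime_dvd_prime_iff_eq Fact.out Nat.prime_two).mp h2)

/-- An element of `SL(2, ℤ_[p])` with unit upper-left entry is in any subgroup
containing all unipotents. -/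
lemma mem_of_isUnit (H : Subgroup (Matrix.SpecialLinearGroup (Fin 2) ℤ_[p]))
    (hU : ∀ t, U t ∈ H) (hL : ∀ t, Lo t ∈ H)
    (g : Matrix.SpecialLinearGroup (Fin 2) ℤ_[p])
    (h : IsUnit ((g : Matrix (Fin 2) (Fin 2) ℤ_[p]) 0 0)) : g ∈ H := by
  obtain ⟨v, hv⟩ := h
  set A := (g : Matrix (Fin 2) (Fin 2) ℤ_[p]) with hA
  set a := A 0 0 with ha
  set b := A 0 1 with hb
  set c := A 1 0 with hc
  set d := A 1 1 with hd
  have hdet : a * d - b * c = 1 := by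
    have := g.2
    rwa [Matrix.det_fin_two] at this
  set a' : ℤ_[p] := ((v⁻¹ : ℤ_[p]ˣ) : ℤ_[p]) with ha'def
  have ha1 : a * a' = 1 := by rw [← hv, ha'def]; exact_mod_cast v.mul_inv
  have key : g = Lo (a' * (c - 1)) * U (a - 1) * Lo 1 * U (a' * (b - a + 1)) := by
    apply Subtype.ext
    show A = _
    rw [Matrix.eta_fin_two A, ← ha, ← hb, ← hc, ← hd]
    simp only [Matrix.SpecialLinearGroup.coe_mul, U_coe, Lo_coe, Matrix.mul_fin_two]
    ext i j
    fin_cases i <;> fin_cases j <;> simp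
    · linear_combination (-(b - a + 1)) * ha1
    · linear_combination (-(c - 1)) * ha1
    · linear_combination (-(a' * (c - 1) * (b - a + 1) + d - 1)) * ha1 + a' * hdet
  rw [key]
  exact mul_mem (mul_mem (mul_mem (hL _) (hU _)) (hL _)) (hU _)

lemma mem_all (H : Subgroup (Matrix.SpecialLinearGroup (Fin 2) ℤ_[p]))
    (hU : ∀ t, U t ∈ H) (hL : ∀ t, Lo t ∈ H)
    (g : Matrix.SpecialLinearGroup (Fin 2) ℤ_[p]) : g ∈ H := by
  set A := (g : Matrix (Fin 2) (Fin 2) ℤ_[p]) with hA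
  by_cases h : IsUnit (A 0 0)
  · exact mem_of_isUnit H hU hL g h
  · -- then A 1 0 is a unit
    have hdet : A 0 0 * A 1 1 - A 0 1 * A 1 0 = 1 := by
      have := g.2; rwa [Matrix.det_fin_two] at this
    have h1 : IsUnit (A 0 0 * A 1 1 + -(A 0 1 * A 1 0)) := by
      rw [← sub_eq_add_neg, hdet]; exact isUnit_one
    have hc : IsUnit (A 1 0) := by
      rcases IsLocalRing.isUnit_or_isUnit_of_isUnit_add h1 with h2 | h2
      · exact absurd (isUnit_of_mul_isUnit_left h2) h
      · exact isUnit_of_mul_isUnit_right (by simpa using h2.neg)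
    have hsum : IsUnit (A 0 0 + A 1 0) := by
      have h3 : IsUnit ((A 0 0 + A 1 0) + -(A 0 0)) := by
        rw [add_neg_cancel_comm]; exact hc
      rcases IsLocalRing.isUnit_or_isUnit_of_isUnit_add h3 with h4 | h4
      · exact h4
      · exact absurd h4.neg (by simpa using h)
    have hg' : IsUnit ((((U 1 * g : Matrix.SpecialLinearGroup (Fin 2) ℤ_[p])) : Matrix (Fin 2) (Fin 2) ℤ_[p]) 0 0) := by
      have : (((U 1 * g : Matrix.SpecialLinearGroup (Fin 2) ℤ_[p])) : Matrix (Fin 2) (Fin 2) ℤ_[p]) 0 0 = A 0 0 + A 1 0 := by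
        simp [Matrix.SpecialLinearGroup.coe_mul, U_coe, Matrix.mul_apply, Fin.sum_univ_two, ← hA]
      rwa [this]
    have := mem_of_isUnit H hU hL (U 1 * g) hg'
    have heq : g = (U 1)⁻¹ * (U 1 * g) := by group
    rw [heq]
    exact mul_mem (inv_mem (hU 1)) this

end DenseSL2Aux

/-- For an odd prime `p`, the subgroup of `SL(2, ℤ_p)` generated by
`[[1,8],[0,1]] = a⁴` and `[[1,0],[8,1]] = b⁴` is dense. -/
theorem dense_subgroup_SL2_padic
    (p : ℕ) [Fact p.Prime] (hp : p ≠ 2)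
    (g₁ g₂ : Matrix.SpecialLinearGroup (Fin 2) ℤ_[p])
    (hg₁ : (g₁ : Matrix (Fin 2) (Fin 2) ℤ_[p]) = !![1, 8; 0, 1])
    (hg₂ : (g₂ : Matrix (Fin 2) (Fin 2) ℤ_[p]) = !![1, 0; 8, 1]) :
    Dense (↑(Subgroup.closure {g₁, g₂}) :
      Set (Matrix.SpecialLinearGroup (Fin 2) ℤ_[p])) := by
  classical
  open DenseSL2Aux in
  set S := Subgroup.closure {g₁, g₂} with hS
  set H := S.topologicalClosure with hH
  have hg₁' : g₁ = U 8 := Subtype.ext (by rw [hg₁]; rfl)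
  have hg₂' : g₂ = Lo 8 := Subtype.ext (by rw [hg₂]; rfl)
  obtain ⟨u, hu⟩ := isUnit_eight (p := p) hp
  have hUH : ∀ t : ℤ_[p], U t ∈ H := by
    intro t
    set f : ℤ_[p] → Matrix.SpecialLinearGroup (Fin 2) ℤ_[p] := fun x => U ((8 : ℤ_[p]) * x)
      with hf
    have hfc : Continuous f := continuous_U.comp (continuous_const.mul continuous_id)
    have hsub : f '' Set.range (Int.cast : ℤ → ℤ_[p]) ⊆ (H : Set _) := by
      rintro _ ⟨_, ⟨n, rfl⟩, rfl⟩
      have : f ((n : ℤ) : ℤ_[p]) = g₁ ^ n := by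
        rw [hg₁', U_zpow, hf]; ring_nf
      rw [this]
      exact S.le_topologicalClosure (zpow_mem (Subgroup.subset_closure (by simp)) n)
    set s : ℤ_[p] := ((u⁻¹ : ℤ_[p]ˣ) : ℤ_[p]) * t with hs
    have hst : (8 : ℤ_[p]) * s = t := by
      rw [hs, ← mul_assoc, ← hu]
      push_cast [← Units.val_mul, mul_inv_cancel]
      simp
    have hmem : U t ∈ closure (f '' Set.range (Int.cast : ℤ → ℤ_[p])) := by
      rw [← hst]
      exact image_closure_subset_closure_image hfc
        (Set.mem_image_of_mem f (PadicInt.denseRange_intCast s))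
    exact closure_minimal hsub (S.isClosed_topologicalClosure) hmem
  have hLH : ∀ t : ℤ_[p], Lo t ∈ H := by
    intro t
    set f : ℤ_[p] → Matrix.SpecialLinearGroup (Fin 2) ℤ_[p] := fun x => Lo ((8 : ℤ_[p]) * x)
      with hf
    have hfc : Continuous f := continuous_Lo.comp (continuous_const.mul continuous_id)
    have hsub : f '' Set.range (Int.cast : ℤ → ℤ_[p]) ⊆ (H : Set _) := by
      rintro _ ⟨_, ⟨n, rfl⟩, rfl⟩
      have : f ((n : ℤ) : ℤ_[p]) = g₂ ^ n := by
        rw [hg₂', Lo_zpow, hf]; ring_nf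
      rw [this]
      exact S.le_topologicalClosure (zpow_mem (Subgroup.subset_closure (by simp)) n)
    set s : ℤ_[p] := ((u⁻¹ : ℤ_[p]ˣ) : ℤ_[p]) * t with hs
    have hst : (8 : ℤ_[p]) * s = t := by
      rw [hs, ← mul_assoc, ← hu]
      push_cast [← Units.val_mul, mul_inv_cancel]
      simp
    have hmem : Lo t ∈ closure (f '' Set.range (Int.cast : ℤ → ℤ_[p])) := by
      rw [← hst]
      exact image_closure_subset_closure_image hfc
        (Set.mem_image_of_mem f (PadicInt.denseRange_intCast s))
    exact closure_minimal hsub (S.isClosed_topologicalClosure) hmem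
  have hall : ∀ g, g ∈ H := mem_all H hUH hLH
  rw [dense_iff_closure_eq, ← Subgroup.topologicalClosure_coe (s := S)]
  exact Set.eq_univ_of_forall hall
end

section
/- Let Γ act freely on a compact metrizable space Z with a unique invariant probability measure μ, and suppose Γ₀ ⊆ Γ is a subgroup such that Γ₀ ↷ Z is minimal with unique invariant measure μ. Let π : Γ → G be a surjective group homomorphism with Γ₀ ⊆ ker π, let G act on a compact metrizable space X, and let Γ act diagonally on Z × X by g·(z,x) = (g·z, π(g)·x). If G ↷ X is minimal, then Γ ↷ Z × X is minimal. -/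
open MeasureTheory

/-- Let `Γ` act freely on compact metrizable `Z` with unique invariant
probability measure `μ`, and let `Γ₀ ≤ Γ` act minimally on `Z` with the same unique
invariant measure. Let `π : Γ → G` be surjective with `Γ₀ ≤ ker π`, `G` acting on `X`.
If `G ↷ X` is minimal, then the diagonal action `g·(z,x) = (g·z, π(g)·x)` of `Γ` on
`Z × X` is minimal. -/
theorem diagonal_action_minimal
    {Γ G Z X : Type*} [Group Γ] [Group G]
    [TopologicalSpace Z] [CompactSpace Z] [TopologicalSpace.MetrizableSpace Z]
    [MeasurableSpace Z] [BorelSpace Z]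
    [TopologicalSpace X] [CompactSpace X] [TopologicalSpace.MetrizableSpace X]
    [MulAction Γ Z] [ContinuousConstSMul Γ Z]
    [MulAction G X] [ContinuousConstSMul G X]
    (hfree : ∀ g : Γ, g ≠ 1 → ∀ z : Z, g • z ≠ z)
    (μ : Measure Z) [IsProbabilityMeasure μ]
    (hμinv : ∀ g : Γ, Measure.map (fun z => g • z) μ = μ)
    (hμuniq : ∀ ν : Measure Z, IsProbabilityMeasure ν →
      (∀ g : Γ, Measure.map (fun z => g • z) ν = ν) → ν = μ)
    (Γ₀ : Subgroup Γ)
    (hΓ₀min : ∀ z : Z, Dense {w : Z | ∃ γ ∈ Γ₀, γ • z = w})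
    (hΓ₀uniq : ∀ ν : Measure Z, IsProbabilityMeasure ν →
      (∀ γ ∈ Γ₀, Measure.map (fun z => γ • z) ν = ν) → ν = μ)
    (π : Γ →* G) (hπ : Function.Surjective π) (hker : Γ₀ ≤ π.ker)
    (hGmin : ∀ x : X, Dense {y : X | ∃ g : G, g • x = y}) :
    ∀ p : Z × X, Dense {q : Z × X | ∃ g : Γ, (g • p.1, π g • p.2) = q} := by

  intro p
  set S : Set (Z × X) := {q : Z × X | ∃ g : Γ, (g • p.1, π g • p.2) = q} with hS
  -- Step 1: for every g and every w, (w, π g • p.2) ∈ closure S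
  have key : ∀ (g : Γ) (w : Z), (w, π g • p.2) ∈ closure S := by
    intro g w
    have hw : w ∈ closure {v : Z | ∃ γ ∈ Γ₀, γ • (g • p.1) = v} := hΓ₀min (g • p.1) w
    have hcont : Continuous (fun v : Z => (v, π g • p.2)) := continuous_id.prodMk continuous_const
    have := map_mem_closure hcont hw (s := {v : Z | ∃ γ ∈ Γ₀, γ • (g • p.1) = v}) (t := S) ?_
    · exact this
    · rintro v ⟨γ, hγ, rfl⟩
      refine ⟨γ * g, ?_⟩
      have hπγ : π γ = 1 := hker hγ
      simp [mul_smul, map_mul, hπγ]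
  intro q
  obtain ⟨w, y⟩ := q
  have hy : y ∈ closure {y' : X | ∃ h : G, h • p.2 = y'} := hGmin p.2 y
  have hcont : Continuous (fun y' : X => ((w, y') : Z × X)) := continuous_const.prodMk continuous_id
  have hsub : Set.MapsTo (fun y' : X => ((w, y') : Z × X)) {y' : X | ∃ h : G, h • p.2 = y'}
      (closure S) := by
    rintro _ ⟨h, rfl⟩
    obtain ⟨g, rfl⟩ := hπ h
    exact key g w
  have : ((w, y) : Z × X) ∈ closure (closure S) :=
    map_mem_closure hcont hy hsub
  simpa using this
end

section
/- In the setting of the previous lemma (Γ ↷ Z uniquely ergodic with invariant measure μ, Γ₀ ⊆ ker π acting minimally and uniquely ergodically on Z, π : Γ → G surjective, G ↷ X, diagonal action on Z × X), let Ω : G × X → ℝ be a continuous 1-cocycle and define Ω₁(g,(z,x)) = Ω(π(g), x). Then Ω₁ is a continuous 1-cocycle for Γ ↷ Z × X, and for each β ∈ ℝ the e^{β·Ω₁}-conformal probability measures on Z × X are exactly the measures μ × ν where ν is an e^{β·Ω}-conformal probability measure on X. In particular the two KMS spectra coincide. -/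
open MeasureTheory
open scoped NNReal ENNReal

lemma secondCountable_of_compact_metrizable (Y : Type*) [TopologicalSpace Y] [CompactSpace Y]
    [TopologicalSpace.MetrizableSpace Y] : SecondCountableTopology Y := by
  letI := TopologicalSpace.metrizableSpaceMetric Y
  infer_instance

lemma ext_of_forall_integral_contMap {Y : Type*} [TopologicalSpace Y] [CompactSpace Y]
    [TopologicalSpace.MetrizableSpace Y] [MeasurableSpace Y] [BorelSpace Y]
    (μ ν : Measure Y) [IsFiniteMeasure μ] [IsFiniteMeasure ν]
    (h : ∀ f : C(Y, ℝ), ∫ y, f y ∂μ = ∫ y, f y ∂ν) : μ = ν := by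
  apply MeasureTheory.ext_of_forall_lintegral_eq_of_IsFiniteMeasure
  intro f
  have hcont : Continuous fun y => ((f y : ℝ)) := NNReal.continuous_coe.comp f.continuous
  have h1 : Integrable (fun y => ((f y : ℝ))) μ := f.integrable_of_nnreal μ
  have h2 : Integrable (fun y => ((f y : ℝ))) ν := f.integrable_of_nnreal ν
  rw [lintegral_coe_eq_integral _ h1, lintegral_coe_eq_integral _ h2]
  exact congrArg ENNReal.ofReal (h (ContinuousMap.mk _ hcont))

lemma prod_of_inv {Γ Z X : Type*} [Group Γ]
    [TopologicalSpace Z] [CompactSpace Z] [TopologicalSpace.MetrizableSpace Z]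
    [MeasurableSpace Z] [BorelSpace Z]
    [TopologicalSpace X] [CompactSpace X] [TopologicalSpace.MetrizableSpace X]
    [MeasurableSpace X] [BorelSpace X]
    [MulAction Γ Z] [ContinuousConstSMul Γ Z]
    (μ : Measure Z) [IsProbabilityMeasure μ]
    (Γ₀ : Subgroup Γ)
    (hΓ₀uniq : ∀ ν : Measure Z, IsProbabilityMeasure ν →
      (∀ γ ∈ Γ₀, Measure.map (fun z => γ • z) ν = ν) → ν = μ)
    (η : Measure (Z × X)) [IsProbabilityMeasure η]
    (hinv : ∀ γ ∈ Γ₀, Measure.map (fun p : Z × X => (γ • p.1, p.2)) η = η) :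
    η = μ.prod (η.map Prod.snd) := by
  set ν := η.map Prod.snd with hνdef
  haveI : IsProbabilityMeasure ν := Measure.isProbabilityMeasure_map measurable_snd.aemeasurable
  have stepA : ∀ h : BoundedContinuousFunction X ℝ≥0, ∀ s : Set Z, MeasurableSet s →
      ∫⁻ p in Prod.fst ⁻¹' s, (h p.2 : ℝ≥0∞) ∂η = (∫⁻ x, (h x : ℝ≥0∞) ∂ν) * μ s := by
    intro h
    set c := ∫⁻ x, (h x : ℝ≥0∞) ∂ν with hc
    have hmeasX : Measurable fun x : X => (h x : ℝ≥0∞) :=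
      measurable_coe_nnreal_ennreal.comp h.continuous.measurable
    have hmeas : Measurable fun p : Z × X => (h p.2 : ℝ≥0∞) := hmeasX.comp measurable_snd
    have hcη : c = ∫⁻ p, (h p.2 : ℝ≥0∞) ∂η := by
      rw [hc, hνdef, lintegral_map hmeasX measurable_snd]
    set D := η.withDensity (fun p => (h p.2 : ℝ≥0∞)) with hD
    set κ := D.map Prod.fst with hκ
    have hκs : ∀ s : Set Z, MeasurableSet s →
        κ s = ∫⁻ p in Prod.fst ⁻¹' s, (h p.2 : ℝ≥0∞) ∂η := by
      intro s hs
      rw [hκ, Measure.map_apply measurable_fst hs, hD,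
        withDensity_apply _ (measurable_fst hs)]
    have hκuniv : κ Set.univ = c := by
      rw [hκs _ MeasurableSet.univ, hcη]
      simp
    have hclt : c < ∞ := by rw [hc]; exact h.lintegral_lt_top_of_nnreal ν
    by_cases hc0 : c = 0
    · intro s hs
      rw [hc0, zero_mul]
      refine le_antisymm ?_ zero_le
      calc ∫⁻ p in Prod.fst ⁻¹' s, (h p.2 : ℝ≥0∞) ∂η
          ≤ ∫⁻ p, (h p.2 : ℝ≥0∞) ∂η := setLIntegral_le_lintegral _ _
        _ = 0 := by rw [← hcη, hc0]
    · -- κ is Γ₀-invariant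
      have hκinv : ∀ γ ∈ Γ₀, Measure.map (fun z => γ • z) κ = κ := by
        intro γ hγ
        have hsm : Measurable fun z : Z => γ • z := (continuous_const_smul γ).measurable
        have hTm : Measurable (fun p : Z × X => (γ • p.1, p.2)) :=
          ((continuous_const_smul γ).comp continuous_fst).prodMk continuous_snd |>.measurable
        have hDinv : Measure.map (fun p : Z × X => (γ • p.1, p.2)) D = D := by
          ext s hs
          rw [Measure.map_apply hTm hs, hD, withDensity_apply _ (hTm hs),
            withDensity_apply _ hs]
          conv_rhs => rw [← hinv γ hγ]
          rw [setLIntegral_map hs hmeas hTm]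
        rw [hκ, Measure.map_map hsm measurable_fst]
        have hcomp : ((fun z => γ • z) ∘ Prod.fst) =
            Prod.fst ∘ (fun p : Z × X => (γ • p.1, p.2)) := rfl
        rw [hcomp, ← Measure.map_map measurable_fst hTm, hDinv]
      haveI hκprob : IsProbabilityMeasure (c⁻¹ • κ) := ⟨by
        rw [Measure.smul_apply, hκuniv, smul_eq_mul, ENNReal.inv_mul_cancel hc0 hclt.ne]⟩
      have hmain := hΓ₀uniq (c⁻¹ • κ) hκprob (fun γ hγ => by
        rw [Measure.map_smul, hκinv γ hγ])
      have hκeq : κ = c • μ := by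
        calc κ = c • (c⁻¹ • κ) := by
              rw [smul_smul, ENNReal.mul_inv_cancel hc0 hclt.ne, one_smul]
          _ = c • μ := by rw [hmain]
      intro s hs
      rw [← hκs s hs, hκeq, Measure.smul_apply, smul_eq_mul]
  have stepB : ∀ s : Set Z, MeasurableSet s → ∀ t : Set X, MeasurableSet t →
      η (s ×ˢ t) = μ s * ν t := by
    intro s hs t ht
    set A := (Prod.fst : Z × X → Z) ⁻¹' s with hA
    have hAm : MeasurableSet A := measurable_fst hs
    haveI : IsFiniteMeasure ((η.restrict A).map Prod.snd) :=
      Measure.isFiniteMeasure_map _ _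
    have key : (η.restrict A).map Prod.snd = (μ s) • ν := by
      apply ext_of_forall_lintegral_eq_of_IsFiniteMeasure
      intro f
      have hfm : Measurable fun x : X => (f x : ℝ≥0∞) :=
        measurable_coe_nnreal_ennreal.comp f.continuous.measurable
      rw [lintegral_map hfm measurable_snd, lintegral_smul_measure, stepA f s hs, mul_comm, smul_eq_mul]
    calc η (s ×ˢ t) = η (Prod.snd ⁻¹' t ∩ A) := by
          rw [Set.prod_eq, Set.inter_comm]
      _ = ((η.restrict A).map Prod.snd) t := by
          rw [Measure.map_apply measurable_snd ht, Measure.restrict_apply (measurable_snd ht)]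
      _ = μ s * ν t := by rw [key, Measure.smul_apply, smul_eq_mul]
  exact (Measure.prod_eq (fun s t hs ht => stepB s hs t ht)).symm

/-- Conformality on `Z × X` for the diagonal `Γ`-action `g·(z,x) = (g·z, π(g)·x)` with
cocycle `Ω₁(g,(z,x)) = Ω(π(g),x)`. -/
def ConformalMeasureDiag {Γ G Z X : Type*} [Group Γ] [Group G]
    [TopologicalSpace Z] [MeasurableSpace Z] [TopologicalSpace X] [MeasurableSpace X]
    [MulAction Γ Z] [MulAction G X]
    (π : Γ →* G) (Ω : G → X → ℝ) (β : ℝ) (η : Measure (Z × X)) : Prop :=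
  ∀ g : Γ, ∀ f : C(Z × X, ℝ),
    ∫ p, f (g • p.1, π g • p.2) * Real.exp (β * Ω (π g) p.2) ∂η = ∫ p, f p ∂η

/-- In the setting of Lemma `diagonal_action_minimal`, with a continuous
1-cocycle `Ω : G × X → ℝ` and `Ω₁(g,(z,x)) = Ω(π(g),x)`: the map `Ω₁` is a continuous
1-cocycle for the diagonal action, and for every `β` the `e^{β·Ω₁}`-conformal probability
measures on `Z × X` are exactly the products `μ × ν` with `ν` an `e^{β·Ω}`-conformal
probability measure; in particular the two KMS spectra coincide. -/
theorem conformal_measures_of_diagonal_action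
    {Γ G Z X : Type*} [Group Γ] [Group G]
    [TopologicalSpace Z] [CompactSpace Z] [TopologicalSpace.MetrizableSpace Z]
    [MeasurableSpace Z] [BorelSpace Z]
    [TopologicalSpace X] [CompactSpace X] [TopologicalSpace.MetrizableSpace X]
    [MeasurableSpace X] [BorelSpace X]
    [MulAction Γ Z] [ContinuousConstSMul Γ Z]
    [MulAction G X] [ContinuousConstSMul G X]
    (hfree : ∀ g : Γ, g ≠ 1 → ∀ z : Z, g • z ≠ z)
    (μ : Measure Z) [IsProbabilityMeasure μ]
    (hμinv : ∀ g : Γ, Measure.map (fun z => g • z) μ = μ)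
    (hμuniq : ∀ ν : Measure Z, IsProbabilityMeasure ν →
      (∀ g : Γ, Measure.map (fun z => g • z) ν = ν) → ν = μ)
    (Γ₀ : Subgroup Γ)
    (hΓ₀min : ∀ z : Z, Dense {w : Z | ∃ γ ∈ Γ₀, γ • z = w})
    (hΓ₀uniq : ∀ ν : Measure Z, IsProbabilityMeasure ν →
      (∀ γ ∈ Γ₀, Measure.map (fun z => γ • z) ν = ν) → ν = μ)
    (π : Γ →* G) (hπ : Function.Surjective π) (hker : Γ₀ ≤ π.ker)
    (Ω : G → X → ℝ) (hΩcont : ∀ g : G, Continuous (Ω g))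
    (hΩ : ∀ (g h : G) (x : X), Ω g (h • x) + Ω h x = Ω (g * h) x) :
    ((∀ g : Γ, Continuous fun p : Z × X => Ω (π g) p.2) ∧
      (∀ (g h : Γ) (p : Z × X),
        Ω (π g) (((h • p.1, π h • p.2) : Z × X)).2 + Ω (π h) p.2
          = Ω (π (g * h)) p.2)) ∧
    (∀ β : ℝ, ∀ η : Measure (Z × X), IsProbabilityMeasure η →
      (ConformalMeasureDiag π Ω β η ↔
        ∃ ν : Measure X, IsProbabilityMeasure ν ∧ ConformalMeasure Ω β ν ∧
          η = μ.prod ν)) ∧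
    {β : ℝ | ∃ η : Measure (Z × X), IsProbabilityMeasure η ∧
        ConformalMeasureDiag π Ω β η}
      = {β : ℝ | ∃ ν : Measure X, IsProbabilityMeasure ν ∧
          ConformalMeasure Ω β ν} := by

  haveI hscZ : SecondCountableTopology Z := secondCountable_of_compact_metrizable Z
  haveI hscX : SecondCountableTopology X := secondCountable_of_compact_metrizable X
  have hΩ1 : ∀ x : X, Ω 1 x = 0 := fun x => by
    have h := hΩ 1 1 x
    rw [one_smul, one_mul] at h
    linarith
  have main : ∀ β : ℝ, ∀ η : Measure (Z × X), IsProbabilityMeasure η →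
      (ConformalMeasureDiag π Ω β η ↔
        ∃ ν : Measure X, IsProbabilityMeasure ν ∧ ConformalMeasure Ω β ν ∧
          η = μ.prod ν) := by
    intro β η hηp
    haveI := hηp
    constructor
    · intro hη
      set ν := η.map Prod.snd with hνdef
      haveI : IsProbabilityMeasure ν := Measure.isProbabilityMeasure_map measurable_snd.aemeasurable
      have hinv : ∀ γ ∈ Γ₀, Measure.map (fun p : Z × X => (γ • p.1, p.2)) η = η := by
        intro γ hγ
        have hπγ : π γ = 1 := hker hγ
        have hTc : Continuous (fun p : Z × X => (γ • p.1, p.2)) :=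
          (continuous_fst.const_smul γ).prodMk continuous_snd
        haveI : IsProbabilityMeasure (Measure.map (fun p : Z × X => (γ • p.1, p.2)) η) :=
          Measure.isProbabilityMeasure_map hTc.measurable.aemeasurable
        apply ext_of_forall_integral_contMap
        intro f
        have h1 := hη γ f
        rw [hπγ] at h1
        simp only [hΩ1, one_smul, mul_zero, Real.exp_zero, mul_one] at h1
        rw [integral_map hTc.measurable.aemeasurable f.continuous.aestronglyMeasurable]
        exact h1
      have hprod : η = μ.prod ν := prod_of_inv μ Γ₀ hΓ₀uniq η hinv
      refine ⟨ν, inferInstance, ?_, hprod⟩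
      intro g f
      obtain ⟨γ, rfl⟩ := hπ g
      have h1 := hη γ (f.comp ⟨Prod.snd, continuous_snd⟩)
      have hcont2 : Continuous fun x : X =>
          f (π γ • x) * Real.exp (β * Ω (π γ) x) :=
        (f.continuous.comp (continuous_const_smul (π γ))).mul
          (Real.continuous_exp.comp (continuous_const.mul (hΩcont (π γ))))
      rw [hνdef, integral_map measurable_snd.aemeasurable hcont2.aestronglyMeasurable,
        integral_map measurable_snd.aemeasurable f.continuous.aestronglyMeasurable]
      exact h1
    · rintro ⟨ν, hνp, hνconf, rfl⟩
      haveI := hνp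
      intro g f
      have hFcont : Continuous fun p : Z × X =>
          f (g • p.1, π g • p.2) * Real.exp (β * Ω (π g) p.2) :=
        (f.continuous.comp ((continuous_fst.const_smul g).prodMk
          (continuous_snd.const_smul (π g)))).mul
          (Real.continuous_exp.comp (continuous_const.mul ((hΩcont (π g)).comp continuous_snd)))
      have hint1 : Integrable (fun p : Z × X =>
          f (g • p.1, π g • p.2) * Real.exp (β * Ω (π g) p.2)) (μ.prod ν) :=
        (BoundedContinuousFunction.mkOfCompact ⟨_, hFcont⟩).integrable _
      have hint2 : Integrable (fun p : Z × X => f p) (μ.prod ν) :=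
        (BoundedContinuousFunction.mkOfCompact f).integrable _
      rw [integral_prod _ hint1, integral_prod _ hint2]
      have hin : ∀ z : Z, (∫ x, f (g • z, π g • x) * Real.exp (β * Ω (π g) x) ∂ν)
          = ∫ x, f (g • z, x) ∂ν := fun z =>
        hνconf (π g) (f.comp ⟨fun x => ((g • z : Z), x), (Continuous.prodMk_right _)⟩)
      simp only [hin]
      have hG : MeasureTheory.StronglyMeasurable fun z : Z => ∫ x, f (z, x) ∂ν :=
        f.continuous.stronglyMeasurable.integral_prod_right'
      calc ∫ z, ∫ x, f (g • z, x) ∂ν ∂μ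
          = ∫ w, ∫ x, f (w, x) ∂ν ∂(μ.map (fun z => g • z)) := by
            rw [integral_map (continuous_const_smul g).measurable.aemeasurable
              (by rw [hμinv g]; exact hG.aestronglyMeasurable)]
        _ = ∫ w, ∫ x, f (w, x) ∂ν ∂μ := by rw [hμinv g]
  refine ⟨⟨fun g => (hΩcont (π g)).comp continuous_snd, fun g h p => by
      rw [map_mul]; exact hΩ (π g) (π h) p.2⟩, main, ?_⟩
  ext β
  simp only [Set.mem_setOf_eq]
  constructor
  · rintro ⟨η, hηp, hηc⟩
    obtain ⟨ν, hνp, hνc, -⟩ := (main β η hηp).mp hηc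
    exact ⟨ν, hνp, hνc⟩
  · rintro ⟨ν, hνp, hνc⟩
    haveI := hνp
    exact ⟨μ.prod ν, inferInstance,
      (main β (μ.prod ν) inferInstance).mpr ⟨ν, hνp, hνc, rfl⟩⟩
end
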